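/- Suppose x* ≠ x^V. Then there exists a direct segmentation (with its direct pricing rule) with consumer surplus u and producer surplus π* if and only if 0 ≤ u ≤ w* − π*. -/

import Mathlib

open Finset

/-- A market: a probability vector over the `K` valuations. -/
def IsMarket (K : ℕ) (x : Fin K → ℝ) : Prop :=
  (∀ j, 0 ≤ x j) ∧ ∑ j, x j = 1

/-- Revenue from charging price `v k` in market `x`. -/
def rev {K : ℕ} (v x : Fin K → ℝ) (k : Fin K) : ℝ :=
  v k * ∑ j ∈ Finset.Ici k, x j

/-- Price `v k` is optimal for market `x`. -/
def OptPrice {K : ℕ} (v x : Fin K → ℝ) (k : Fin K) : Prop :=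
  ∀ i, rev v x i ≤ rev v x k

/-- A segmentation of the aggregate market `xstar`: a finitely supported probability
distribution on markets averaging to `xstar`. -/
def IsSegmentation {K : ℕ} (xstar : Fin K → ℝ) (σ : (Fin K → ℝ) →₀ ℝ) : Prop :=
  (∀ x, 0 ≤ σ x) ∧ (∑ x ∈ σ.support, σ x = 1) ∧
  (∀ x ∈ σ.support, IsMarket K x) ∧
  (∑ x ∈ σ.support, σ x • x = xstar)

/-- A pricing rule assigns a probability vector over prices to each market in the support. -/
def IsPricingRule {K : ℕ} (σ : (Fin K → ℝ) →₀ ℝ) (φ : (Fin K → ℝ) → Fin K → ℝ) : Prop :=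
  ∀ x ∈ σ.support, (∀ k, 0 ≤ φ x k) ∧ ∑ k, φ x k = 1

/-- A pricing rule is optimal if it only charges optimal prices. -/
def IsOptimalPricing {K : ℕ} (v : Fin K → ℝ) (σ : (Fin K → ℝ) →₀ ℝ)
    (φ : (Fin K → ℝ) → Fin K → ℝ) : Prop :=
  ∀ x ∈ σ.support, ∀ k, 0 < φ x k → OptPrice v x k

/-- Consumer surplus of a segmentation and pricing rule. -/
def consumerSurplus {K : ℕ} (v : Fin K → ℝ) (σ : (Fin K → ℝ) →₀ ℝ)
    (φ : (Fin K → ℝ) → Fin K → ℝ) : ℝ :=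
  ∑ x ∈ σ.support, σ x * ∑ k, φ x k * ∑ j ∈ Finset.Ici k, (v j - v k) * x j

/-- Producer surplus of a segmentation and pricing rule. -/
def producerSurplus {K : ℕ} (v : Fin K → ℝ) (σ : (Fin K → ℝ) →₀ ℝ)
    (φ : (Fin K → ℝ) → Fin K → ℝ) : ℝ :=
  ∑ x ∈ σ.support, σ x * ∑ k, φ x k * (v k * ∑ j ∈ Finset.Ici k, x j)

/-- A direct segmentation: markets `xs k` for `k ∈ A`, pairwise distinct, with
`xs k ∈ X_k`, weights `w k > 0` summing to one and averaging to `xstar`. -/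
def IsDirectSeg {K : ℕ} (v xstar : Fin K → ℝ) (A : Finset (Fin K))
    (xs : Fin K → Fin K → ℝ) (w : Fin K → ℝ) : Prop :=
  Set.InjOn xs (A : Set (Fin K)) ∧
  (∀ k ∈ A, IsMarket K (xs k)) ∧
  (∀ k ∈ A, OptPrice v (xs k) k) ∧
  (∀ k ∈ A, 0 < w k) ∧
  (∑ k ∈ A, w k = 1) ∧
  (∑ k ∈ A, w k • xs k = xstar)

/-- Consumer surplus of a direct segmentation (with its direct pricing rule). -/
def directCS {K : ℕ} (v : Fin K → ℝ) (A : Finset (Fin K))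
    (xs : Fin K → Fin K → ℝ) (w : Fin K → ℝ) : ℝ :=
  ∑ k ∈ A, w k * ∑ j ∈ Finset.Ici k, (v j - v k) * xs k j

/-- Producer surplus of a direct segmentation (with its direct pricing rule). -/
def directPS {K : ℕ} (v : Fin K → ℝ) (A : Finset (Fin K))
    (xs : Fin K → Fin K → ℝ) (w : Fin K → ℝ) : ℝ :=
  ∑ k ∈ A, w k * (v k * ∑ j ∈ Finset.Ici k, xs k j)

/-- `x` is the characteristic market `x^S`: supported in `S`, and every price in `S`
yields the same revenue. -/
def IsCharMarket {K : ℕ} (v : Fin K → ℝ) (S : Finset (Fin K)) (x : Fin K → ℝ) : Prop :=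
  IsMarket K x ∧ (∀ j ∉ S, x j = 0) ∧ ∀ i ∈ S, ∀ i' ∈ S, rev v x i = rev v x i'

/-- The joint distribution over valuations and prices induced by `(σ, φ)`:
mass of the pair `(v j, v k)`. -/
def jointDist {K : ℕ} (σ : (Fin K → ℝ) →₀ ℝ) (φ : (Fin K → ℝ) → Fin K → ℝ)
    (j k : Fin K) : ℝ :=
  ∑ x ∈ σ.support, σ x * φ x k * x j

/-- The joint distribution over valuations and prices induced by a direct segmentation
with its direct pricing rule. -/
def directJoint {K : ℕ} (A : Finset (Fin K)) (xs : Fin K → Fin K → ℝ) (w : Fin K → ℝ)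
    (j k : Fin K) : ℝ :=
  if k ∈ A then w k * xs k j else 0

/-- The total mass `m_k` of price `v k` under `(σ, φ)`. -/
noncomputable def mass {K : ℕ} (σ : (Fin K → ℝ) →₀ ℝ) (φ : (Fin K → ℝ) → Fin K → ℝ)
    (k : Fin K) : ℝ :=
  ∑ x ∈ σ.support, σ x * φ x k

/-- The conditional market `x^k` given price `v k` under `(σ, φ)`. -/
noncomputable def condMarket {K : ℕ} (σ : (Fin K → ℝ) →₀ ℝ) (φ : (Fin K → ℝ) → Fin K → ℝ)
    (k : Fin K) : Fin K → ℝ :=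
  (mass σ φ k)⁻¹ • ∑ x ∈ σ.support, (σ x * φ x k) • x

section XS
variable {K : ℕ} (v : Fin K → ℝ)

/-- inverse value of the next element of `S` strictly above `j` (0 if none). -/
noncomputable def nub (S : Finset (Fin K)) (j : Fin K) : ℝ :=
  if h : (S.filter (fun i => j < i)).Nonempty then (v ((S.filter (fun i => j < i)).min' h))⁻¹ else 0

/-- inverse value of the least element of `S` at or above `i` (0 if none). -/
noncomputable def geInv (S : Finset (Fin K)) (i : Fin K) : ℝ :=
  if h : (S.filter (fun i' => i ≤ i')).Nonempty then (v ((S.filter (fun i' => i ≤ i')).min' h))⁻¹ else 0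

/-- the characteristic market x^S -/
noncomputable def xSeg (S : Finset (Fin K)) (j : Fin K) : ℝ :=
  if hS : S.Nonempty then (if j ∈ S then v (S.min' hS) * ((v j)⁻¹ - nub v S j) else 0) else 0

lemma telescope (f : Fin K → ℝ) :
    ∀ (T : Finset (Fin K)),
      (∑ j ∈ T, (f j - (if h : (T.filter (fun i => j < i)).Nonempty
          then f ((T.filter (fun i => j < i)).min' h) else 0)))
      = if h : T.Nonempty then f (T.min' h) else 0 := by
  intro T
  induction T using Finset.strongInductionOn with
  | _ T IH =>
    rcases eq_or_ne T ∅ with rfl | hTne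
    · simp
    · have hT : T.Nonempty := Finset.nonempty_iff_ne_empty.2 hTne
      set a := T.min' hT with ha
      have haT : a ∈ T := T.min'_mem hT
      have hsub : T.erase a ⊂ T := Finset.erase_ssubset haT
      have hstep : ∀ j ∈ T.erase a, T.filter (fun i => j < i) = (T.erase a).filter (fun i => j < i) := by
        intro j hj
        ext l
        simp only [Finset.mem_filter, Finset.mem_erase]
        constructor
        · rintro ⟨hl, hjl⟩
          refine ⟨⟨?_, hl⟩, hjl⟩
          rintro rfl
          exact absurd (T.min'_le j (Finset.mem_of_mem_erase hj)) (not_le.2 hjl)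
        · rintro ⟨⟨_, hl⟩, hjl⟩; exact ⟨hl, hjl⟩
      have hfa : T.filter (fun i => a < i) = T.erase a := by
        ext l
        simp only [Finset.mem_filter, Finset.mem_erase]
        constructor
        · rintro ⟨hl, hal⟩; exact ⟨ne_of_gt hal, hl⟩
        · rintro ⟨hne, hl⟩; exact ⟨hl, lt_of_le_of_ne (T.min'_le l hl) (Ne.symm hne)⟩
      rw [← Finset.sum_erase_add T _ haT]
      rw [Finset.sum_congr rfl (fun j hj => by rw [hstep j hj])]
      rw [IH _ hsub]
      rw [hfa]
      rcases eq_or_ne (T.erase a) ∅ with he | hne'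
      · simp [he, ha, hT]
      · have h2 : (T.erase a).Nonempty := Finset.nonempty_iff_ne_empty.2 hne'
        simp only [dif_pos h2, dif_pos hT]
        ring

lemma sum_Ici_xSeg (S : Finset (Fin K)) (hS : S.Nonempty) (i : Fin K) :
    ∑ j ∈ Finset.Ici i, xSeg v S j = v (S.min' hS) * geInv v S i := by
  classical
  set T := S.filter (fun j => i ≤ j) with hT
  have hTsub : T ⊆ Finset.Ici i := by
    intro j hj; simp only [hT, Finset.mem_filter] at hj; exact Finset.mem_Ici.2 hj.2
  have h0 : ∀ j ∈ Finset.Ici i, j ∉ T → xSeg v S j = 0 := by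
    intro j hj hjT
    have : j ∉ S := by
      intro hjS; exact hjT (by simp [hT, Finset.mem_filter, hjS, Finset.mem_Ici.1 hj])
    simp [xSeg, hS, this]
  rw [← Finset.sum_subset hTsub h0]
  have hTS : ∀ j ∈ T, xSeg v S j = v (S.min' hS) * ((v j)⁻¹ - (if h : (T.filter (fun l => j < l)).Nonempty then (v ((T.filter (fun l => j < l)).min' h))⁻¹ else 0)) := by
    intro j hj
    simp only [hT, Finset.mem_filter] at hj
    have hfe : S.filter (fun l => j < l) = T.filter (fun l => j < l) := by
      ext l
      simp only [hT, Finset.mem_filter]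
      constructor
      · rintro ⟨hl, hjl⟩; exact ⟨⟨hl, le_trans hj.2 (le_of_lt hjl)⟩, hjl⟩
      · rintro ⟨⟨hl, _⟩, hjl⟩; exact ⟨hl, hjl⟩
    simp only [xSeg, dif_pos hS, if_pos hj.1, nub, hfe]
  rw [Finset.sum_congr rfl hTS, ← Finset.mul_sum]
  congr 1
  have := telescope (fun j => (v j)⁻¹) T
  rw [this]
  simp only [geInv, ← hT]

lemma xSeg_eq_zero {S : Finset (Fin K)} {j : Fin K} (hj : j ∉ S) : xSeg v S j = 0 := by
  rcases Finset.eq_empty_or_nonempty S with rfl | hS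
  · simp [xSeg]
  · simp [xSeg, hS, hj]

lemma vmono (hv : StrictMono v) : Monotone v := hv.monotone

lemma nub_lt (hv0 : ∀ k, 0 < v k) (hv : StrictMono v) {S : Finset (Fin K)} {j : Fin K} : nub v S j < (v j)⁻¹ := by
  unfold nub
  split_ifs with h
  · have hm := (S.filter (fun i => j < i)).min'_mem h
    have : j < (S.filter (fun i => j < i)).min' h := (Finset.mem_filter.1 hm).2
    exact inv_strictAnti₀ (hv0 j) (hv this)
  · exact inv_pos.2 (hv0 j)

lemma xSeg_pos (hv0 : ∀ k, 0 < v k) (hv : StrictMono v) {S : Finset (Fin K)} (hS : S.Nonempty) {j : Fin K} (hj : j ∈ S) :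
    0 < xSeg v S j := by
  simp only [xSeg, dif_pos hS, if_pos hj]
  exact mul_pos (hv0 _) (sub_pos.2 (nub_lt v hv0 hv))

lemma xSeg_nonneg (hv0 : ∀ k, 0 < v k) (hv : StrictMono v) {S : Finset (Fin K)} (j : Fin K) : 0 ≤ xSeg v S j := by
  rcases Finset.eq_empty_or_nonempty S with rfl | hS
  · simp [xSeg]
  · by_cases hj : j ∈ S
    · exact le_of_lt (xSeg_pos v hv0 hv hS hj)
    · rw [xSeg_eq_zero v hj]

lemma sum_xSeg_one (hv0 : ∀ k, 0 < v k) {S : Finset (Fin K)} (hS : S.Nonempty) :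
    ∑ j, xSeg v S j = 1 := by
  obtain ⟨e, he⟩ := hS
  have hK : 0 < K := e.pos
  set i0 : Fin K := ⟨0, hK⟩ with hi0
  have huniv : Finset.Ici i0 = Finset.univ := by
    ext j; simp [Fin.le_def, hi0]
  rw [← huniv, sum_Ici_xSeg v S ⟨e, he⟩ i0]
  have hfe : S.filter (fun i' => i0 ≤ i') = S := by
    apply Finset.filter_true_of_mem
    intro l _; exact Fin.mk_le_of_le_val (Nat.zero_le _)
  rw [geInv, dif_pos (by rw [hfe]; exact ⟨e, he⟩)]
  have : (S.filter (fun i' => i0 ≤ i')).min' (by rw [hfe]; exact ⟨e, he⟩) = S.min' ⟨e, he⟩ := by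
    congr 1 <;> rw [hfe]
  rw [this, mul_inv_cancel₀ (ne_of_gt (hv0 _))]

lemma rev_xSeg (S : Finset (Fin K)) (hS : S.Nonempty) (i : Fin K) :
    rev v (xSeg v S) i = v i * (v (S.min' hS) * geInv v S i) := by
  rw [rev, sum_Ici_xSeg v S hS i]

lemma rev_xSeg_eq_of_mem (hv0 : ∀ k, 0 < v k) {S : Finset (Fin K)} (hS : S.Nonempty) {i : Fin K} (hi : i ∈ S) :
    rev v (xSeg v S) i = v (S.min' hS) := by
  rw [rev_xSeg v S hS i]
  have hne : (S.filter (fun i' => i ≤ i')).Nonempty := ⟨i, Finset.mem_filter.2 ⟨hi, le_refl i⟩⟩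
  have hmin : (S.filter (fun i' => i ≤ i')).min' hne = i := by
    apply le_antisymm
    · exact Finset.min'_le _ _ (Finset.mem_filter.2 ⟨hi, le_refl i⟩)
    · exact (Finset.mem_filter.1 ((S.filter (fun i' => i ≤ i')).min'_mem hne)).2
  rw [geInv, dif_pos hne, hmin]
  rw [mul_comm (v i), mul_assoc, inv_mul_cancel₀ (ne_of_gt (hv0 i)), mul_one]

lemma rev_xSeg_le (hv0 : ∀ k, 0 < v k) (hv : StrictMono v) {S : Finset (Fin K)} (hS : S.Nonempty) (i : Fin K) :
    rev v (xSeg v S) i ≤ v (S.min' hS) := by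
  rw [rev_xSeg v S hS i, geInv]
  split_ifs with h
  · set l := (S.filter (fun i' => i ≤ i')).min' h with hl
    have hil : i ≤ l := (Finset.mem_filter.1 ((S.filter (fun i' => i ≤ i')).min'_mem h)).2
    have hvil : v i ≤ v l := vmono v hv hil
    have h1 : v i * (v (S.min' hS) * (v l)⁻¹) = v (S.min' hS) * (v i / v l) := by ring
    rw [h1]
    have : v i / v l ≤ 1 := (div_le_one (hv0 l)).2 hvil
    nlinarith [hv0 (S.min' hS)]
  · simp only [mul_zero]
    nlinarith [hv0 (S.min' hS), hv0 i]

lemma rev_xSeg_lt_of_not_mem (hv0 : ∀ k, 0 < v k) (hv : StrictMono v) {S : Finset (Fin K)} (hS : S.Nonempty) {i : Fin K} (hi : i ∉ S) :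
    rev v (xSeg v S) i < v (S.min' hS) := by
  rw [rev_xSeg v S hS i, geInv]
  split_ifs with h
  · set l := (S.filter (fun i' => i ≤ i')).min' h with hl
    have hlmem := (S.filter (fun i' => i ≤ i')).min'_mem h
    have hil : i ≤ l := (Finset.mem_filter.1 hlmem).2
    have hla : l ∈ S := (Finset.mem_filter.1 hlmem).1
    have hlt : i < l := lt_of_le_of_ne hil (fun he => hi (he ▸ hla))
    have hvil : v i < v l := hv hlt
    have h1 : v i * (v (S.min' hS) * (v l)⁻¹) = v (S.min' hS) * (v i / v l) := by ring
    rw [h1]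
    have : v i / v l < 1 := (div_lt_one (hv0 l)).2 hvil
    nlinarith [hv0 (S.min' hS)]
  · simp only [mul_zero]
    nlinarith [hv0 (S.min' hS), hv0 i]

lemma optPrice_xSeg (hv0 : ∀ k, 0 < v k) (hv : StrictMono v) {S : Finset (Fin K)} (hS : S.Nonempty) {k : Fin K} (hk : k ∈ S) :
    ∀ i, rev v (xSeg v S) i ≤ rev v (xSeg v S) k := by
  intro i
  rw [rev_xSeg_eq_of_mem v hv0 hS hk]
  exact rev_xSeg_le v hv0 hv hS i

end XS

section Generic
variable {K : ℕ} (v : Fin K → ℝ)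

/-- consumer surplus at price k in market y -/
def csf (y : Fin K → ℝ) (k : Fin K) : ℝ := ∑ j ∈ Finset.Ici k, (v j - v k) * y j

/-- total welfare of market y -/
def welf (y : Fin K → ℝ) : ℝ := ∑ j, v j * y j

lemma rev_nonneg (hv0 : ∀ k, 0 < v k) {y : Fin K → ℝ} (hy : ∀ j, 0 ≤ y j) (i : Fin K) :
    0 ≤ rev v y i :=
  mul_nonneg (le_of_lt (hv0 i)) (Finset.sum_nonneg fun j _ => hy j)

lemma csf_nonneg (hv : StrictMono v) {y : Fin K → ℝ} (hy : ∀ j, 0 ≤ y j) (k : Fin K) :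
    0 ≤ csf v y k := by
  apply Finset.sum_nonneg
  intro j hj
  exact mul_nonneg (sub_nonneg.2 (hv.monotone (Finset.mem_Ici.1 hj))) (hy j)

lemma csf_antitone (hv : StrictMono v) {y : Fin K → ℝ} (hy : ∀ j, 0 ≤ y j)
    {k k' : Fin K} (hkk : k ≤ k') : csf v y k' ≤ csf v y k := by
  unfold csf
  have hsub : Finset.Ici k' ⊆ Finset.Ici k := fun j hj =>
    Finset.mem_Ici.2 (le_trans hkk (Finset.mem_Ici.1 hj))
  calc ∑ j ∈ Finset.Ici k', (v j - v k') * y j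
      ≤ ∑ j ∈ Finset.Ici k', (v j - v k) * y j := by
        apply Finset.sum_le_sum
        intro j _
        have : v k ≤ v k' := hv.monotone hkk
        nlinarith [hy j]
    _ ≤ ∑ j ∈ Finset.Ici k, (v j - v k) * y j := by
        apply Finset.sum_le_sum_of_subset_of_nonneg hsub
        intro j hj _
        exact mul_nonneg (sub_nonneg.2 (hv.monotone (Finset.mem_Ici.1 hj))) (hy j)

lemma csf_eq_welf_sub_rev {y : Fin K → ℝ} {a : Fin K} (hsupp : ∀ j, ¬ a ≤ j → y j = 0) :
    csf v y a = welf v y - rev v y a := by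
  unfold csf welf rev
  rw [Finset.mul_sum]
  have h1 : ∑ j, v j * y j = ∑ j ∈ Finset.Ici a, v j * y j := by
    symm
    apply Finset.sum_subset (Finset.subset_univ _)
    intro j _ hj
    rw [hsupp j (fun h => hj (Finset.mem_Ici.2 h)), mul_zero]
  rw [h1, ← Finset.sum_sub_distrib]
  apply Finset.sum_congr rfl
  intro j _; ring

lemma rev_linear (F : Finset ℕ) (c : ℕ → ℝ) (z : ℕ → Fin K → ℝ) (i : Fin K) :
    rev v (fun j => ∑ s ∈ F, c s * z s j) i = ∑ s ∈ F, c s * rev v (z s) i := by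
  unfold rev
  calc v i * ∑ j ∈ Finset.Ici i, (∑ s ∈ F, c s * z s j)
      = ∑ j ∈ Finset.Ici i, ∑ s ∈ F, c s * (v i * z s j) := by
        rw [Finset.mul_sum]
        refine Finset.sum_congr rfl fun j _ => ?_
        rw [Finset.mul_sum]
        exact Finset.sum_congr rfl fun s _ => by ring
    _ = ∑ s ∈ F, ∑ j ∈ Finset.Ici i, c s * (v i * z s j) := Finset.sum_comm
    _ = ∑ s ∈ F, c s * (v i * ∑ j ∈ Finset.Ici i, z s j) := by
        refine Finset.sum_congr rfl fun s _ => ?_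
        rw [Finset.mul_sum, Finset.mul_sum]

lemma csf_linear (F : Finset ℕ) (c : ℕ → ℝ) (z : ℕ → Fin K → ℝ) (k : Fin K) :
    csf v (fun j => ∑ s ∈ F, c s * z s j) k = ∑ s ∈ F, c s * csf v (z s) k := by
  unfold csf
  calc ∑ j ∈ Finset.Ici k, (v j - v k) * (∑ s ∈ F, c s * z s j)
      = ∑ j ∈ Finset.Ici k, ∑ s ∈ F, c s * ((v j - v k) * z s j) := by
        refine Finset.sum_congr rfl fun j _ => ?_
        rw [Finset.mul_sum]
        exact Finset.sum_congr rfl fun s _ => by ring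
    _ = ∑ s ∈ F, ∑ j ∈ Finset.Ici k, c s * ((v j - v k) * z s j) := Finset.sum_comm
    _ = ∑ s ∈ F, c s * ∑ j ∈ Finset.Ici k, (v j - v k) * z s j := by
        refine Finset.sum_congr rfl fun s _ => ?_
        rw [Finset.mul_sum]

lemma welf_linear (F : Finset ℕ) (c : ℕ → ℝ) (z : ℕ → Fin K → ℝ) :
    welf v (fun j => ∑ s ∈ F, c s * z s j) = ∑ s ∈ F, c s * welf v (z s) := by
  unfold welf
  calc ∑ j : Fin K, v j * (∑ s ∈ F, c s * z s j)
      = ∑ j : Fin K, ∑ s ∈ F, c s * (v j * z s j) := by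
        refine Finset.sum_congr rfl fun j _ => ?_
        rw [Finset.mul_sum]
        exact Finset.sum_congr rfl fun s _ => by ring
    _ = ∑ s ∈ F, ∑ j : Fin K, c s * (v j * z s j) := Finset.sum_comm
    _ = ∑ s ∈ F, c s * ∑ j : Fin K, v j * z s j := by
        refine Finset.sum_congr rfl fun s _ => ?_
        rw [Finset.mul_sum]

lemma Ici_bot_univ (hK : 0 < K) : Finset.Ici (⟨0, hK⟩ : Fin K) = Finset.univ := by
  ext j; simp [Fin.le_def]

lemma Ici_insert (j : Fin K) : Finset.Ici j = insert j (Finset.Ioi j) := by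
  ext l
  simp only [Finset.mem_Ici, Finset.mem_insert, Finset.mem_Ioi]
  constructor
  · intro h
    rcases eq_or_lt_of_le h with h' | h'
    · exact Or.inl h'.symm
    · exact Or.inr h'
  · rintro (rfl | h)
    · exact le_refl _
    · exact le_of_lt h

lemma eq_of_tails {y z : Fin K → ℝ}
    (h : ∀ i, ∑ l ∈ Finset.Ici i, y l = ∑ l ∈ Finset.Ici i, z l) : y = z := by
  have main : ∀ m : ℕ, ∀ j : Fin K, (K - j.val = m) → y j = z j := by
    intro m
    induction m using Nat.strong_induction_on with
    | _ m IH =>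
      intro j hj
      have hIoi : ∑ l ∈ Finset.Ioi j, y l = ∑ l ∈ Finset.Ioi j, z l := by
        apply Finset.sum_congr rfl
        intro l hl
        have hlt : j < l := Finset.mem_Ioi.1 hl
        exact IH (K - l.val) (by have h1 : (j:ℕ) < (l:ℕ) := hlt; have h2 := l.isLt; omega) l rfl
      have h1 := h j
      rw [Ici_insert, Finset.sum_insert (by simp), Finset.sum_insert (by simp)] at h1
      linarith [hIoi]
  funext j
  exact main (K - j.val) j rfl

end Generic

section Chain
variable {K : ℕ} (v : Fin K → ℝ)

lemma univ_min' (hK : 0 < K) (h : (Finset.univ : Finset (Fin K)).Nonempty) :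
    Finset.univ.min' h = (⟨0, hK⟩ : Fin K) := by
  apply le_antisymm
  · exact Finset.min'_le _ _ (Finset.mem_univ _)
  · exact Fin.mk_le_of_le_val (Nat.zero_le _)

lemma geInv_of_mem {S : Finset (Fin K)} {i : Fin K} (hi : i ∈ S) :
    geInv v S i = (v i)⁻¹ := by
  have hne : (S.filter (fun i' => i ≤ i')).Nonempty := ⟨i, Finset.mem_filter.2 ⟨hi, le_refl i⟩⟩
  have hmin : (S.filter (fun i' => i ≤ i')).min' hne = i := by
    apply le_antisymm
    · exact Finset.min'_le _ _ (Finset.mem_filter.2 ⟨hi, le_refl i⟩)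
    · exact (Finset.mem_filter.1 ((S.filter (fun i' => i ≤ i')).min'_mem hne)).2
  rw [geInv, dif_pos hne, hmin]

lemma charMarket_unique (hK : 0 < K) (hv0 : ∀ k, 0 < v k) {y : Fin K → ℝ}
    (hysum : ∑ j, y j = 1)
    (hrev : ∀ i i' : Fin K, rev v y i = rev v y i') :
    y = xSeg v Finset.univ := by
  have huniv : (Finset.univ : Finset (Fin K)).Nonempty := ⟨⟨0, hK⟩, Finset.mem_univ _⟩
  apply eq_of_tails
  intro i
  set i0 : Fin K := ⟨0, hK⟩ with hi0
  have h1 : rev v y i = rev v y i0 := hrev i i0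
  have h2 : rev v y i0 = v i0 := by
    rw [rev, Ici_bot_univ hK, hysum, mul_one]
  have h3 : ∑ l ∈ Finset.Ici i, y l = v i0 * (v i)⁻¹ := by
    have h4 : v i * ∑ l ∈ Finset.Ici i, y l = v i0 := by rw [← rev, h1, h2]
    rw [← h4, mul_comm (v i), mul_assoc, mul_inv_cancel₀ (ne_of_gt (hv0 i)), mul_one]
  rw [h3, sum_Ici_xSeg v Finset.univ huniv i, geInv_of_mem v (Finset.mem_univ i),
    univ_min' hK huniv]

open Classical in
/-- support of a nonnegative vector as a finset -/
noncomputable def fsupp (g : Fin K → ℝ) : Finset (Fin K) :=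
  Finset.univ.filter (fun j => g j ≠ 0)

lemma mem_fsupp {g : Fin K → ℝ} {j : Fin K} : j ∈ fsupp g ↔ g j ≠ 0 := by
  classical
  simp [fsupp]

/-- tail of g vanishes beyond its support -/
lemma tail_zero {g : Fin K → ℝ} {S : Finset (Fin K)} (hgS : ∀ j, g j ≠ 0 → j ∈ S)
    {i : Fin K} (hemp : ¬ (S.filter (fun i' => i ≤ i')).Nonempty) :
    ∑ l ∈ Finset.Ici i, g l = 0 := by
  apply Finset.sum_eq_zero
  intro l hl
  by_contra hne
  exact hemp ⟨l, Finset.mem_filter.2 ⟨hgS l hne, Finset.mem_Ici.1 hl⟩⟩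

/-- tail of g from i equals tail from the next support point -/
lemma tail_shift {g : Fin K → ℝ} {S : Finset (Fin K)} (hgS : ∀ j, g j ≠ 0 → j ∈ S)
    {i : Fin K} (hne : (S.filter (fun i' => i ≤ i')).Nonempty) :
    ∑ l ∈ Finset.Ici i, g l = ∑ l ∈ Finset.Ici ((S.filter (fun i' => i ≤ i')).min' hne), g l := by
  set i' := (S.filter (fun i' => i ≤ i')).min' hne with hi'
  have hii' : i ≤ i' := (Finset.mem_filter.1 ((S.filter (fun i' => i ≤ i')).min'_mem hne)).2
  symm
  apply Finset.sum_subset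
  · intro l hl
    exact Finset.mem_Ici.2 (le_trans hii' (Finset.mem_Ici.1 hl))
  · intro l hl hl'
    by_contra hne2
    have hlS : l ∈ S := hgS l hne2
    have : i' ≤ l := Finset.min'_le _ _ (Finset.mem_filter.2 ⟨hlS, Finset.mem_Ici.1 hl⟩)
    exact hl' (Finset.mem_Ici.2 this)

lemma istar_mem_fsupp (hv0 : ∀ k, 0 < v k) (hv : StrictMono v) {istar : Fin K}
    {g : Fin K → ℝ} (hg : ∀ j, 0 ≤ g j)
    (hOPT : ∀ i, rev v g i ≤ rev v g istar)
    (hne : (fsupp g).Nonempty) : istar ∈ fsupp g := by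
  by_contra hmem
  set S := fsupp g with hS
  have hgS : ∀ j, g j ≠ 0 → j ∈ S := fun j hj => mem_fsupp.2 hj
  have tailpos : ∀ j ∈ S, 0 < ∑ l ∈ Finset.Ici j, g l := by
    intro j hj
    have : 0 < g j := lt_of_le_of_ne (hg j) (Ne.symm (mem_fsupp.1 hj))
    have hle : g j ≤ ∑ l ∈ Finset.Ici j, g l :=
      Finset.single_le_sum (fun l _ => hg l) (Finset.mem_Ici.2 (le_refl j))
    linarith
  by_cases hfil : (S.filter (fun i' => istar ≤ i')).Nonempty
  · set i' := (S.filter (fun i' => istar ≤ i')).min' hfil with hi'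
    have hmem' := (S.filter (fun i' => istar ≤ i')).min'_mem hfil
    have hi'S : i' ∈ S := (Finset.mem_filter.1 hmem').1
    have hii' : istar ≤ i' := (Finset.mem_filter.1 hmem').2
    have hneq : istar ≠ i' := fun he => hmem (he ▸ hi'S)
    have hlt : istar < i' := lt_of_le_of_ne hii' hneq
    have htail : ∑ l ∈ Finset.Ici istar, g l = ∑ l ∈ Finset.Ici i', g l :=
      tail_shift hgS hfil
    have h1 : rev v g istar < rev v g i' := by
      rw [rev, rev, htail]
      exact mul_lt_mul_of_pos_right (hv hlt) (tailpos i' hi'S)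
    exact absurd (hOPT i') (not_le.2 h1)
  · have htail : ∑ l ∈ Finset.Ici istar, g l = 0 := tail_zero hgS hfil
    obtain ⟨j, hj⟩ := hne
    have h1 : rev v g istar = 0 := by rw [rev, htail, mul_zero]
    have h2 : 0 < rev v g j := mul_pos (hv0 j) (tailpos j hj)
    exact absurd (hOPT j) (not_le.2 (by rw [h1]; exact h2))

end Chain

section Chain2
variable {K : ℕ} (v : Fin K → ℝ)

lemma chain_step (hv0 : ∀ k, 0 < v k) (hv : StrictMono v) {istar : Fin K} {g : Fin K → ℝ}
    (hg : ∀ j, 0 ≤ g j) (hOPT : ∀ i, rev v g i ≤ rev v g istar)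
    (hne : (fsupp g).Nonempty) :
    ∃ t : ℝ, 0 < t ∧
      (∀ j, 0 ≤ g j - t * xSeg v (fsupp g) j) ∧
      (fsupp (fun j => g j - t * xSeg v (fsupp g) j) ⊂ fsupp g) ∧
      (∀ i, rev v (fun j => g j - t * xSeg v (fsupp g) j) i
          ≤ rev v (fun j => g j - t * xSeg v (fsupp g) j) istar) ∧
      (∑ j, (g j - t * xSeg v (fsupp g) j) = (∑ j, g j) - t) := by
  classical
  set S := fsupp g with hSdef
  have histar : istar ∈ S := istar_mem_fsupp v hv0 hv hg hOPT hne
  have hgpos : ∀ j ∈ S, 0 < g j := fun j hj => lt_of_le_of_ne (hg j) (Ne.symm (mem_fsupp.1 hj))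
  set t := S.inf' hne (fun j => g j / xSeg v S j) with ht
  have htpos : 0 < t := by
    rw [ht, Finset.lt_inf'_iff]
    intro j hj
    exact div_pos (hgpos j hj) (xSeg_pos v hv0 hv hne hj)
  set g' := fun j => g j - t * xSeg v S j with hg'
  have hg'0 : ∀ j, j ∉ S → g' j = 0 := by
    intro j hj
    have h1 : g j = 0 := by by_contra h; exact hj (mem_fsupp.2 h)
    simp [hg', h1, xSeg_eq_zero v hj]
  have hg'nn : ∀ j, 0 ≤ g' j := by
    intro j
    by_cases hj : j ∈ S
    · have h1 : t ≤ g j / xSeg v S j := Finset.inf'_le _ hj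
      have h2 : 0 < xSeg v S j := xSeg_pos v hv0 hv hne hj
      show 0 ≤ g j - t * xSeg v S j
      have := (le_div_iff₀ h2).1 h1
      linarith
    · rw [hg'0 j hj]
  have hsub : fsupp g' ⊆ S := by
    intro j hj
    by_contra h
    exact (mem_fsupp.1 hj) (hg'0 j h)
  have hssub : fsupp g' ⊂ S := by
    obtain ⟨j0, hj0, hj0e⟩ := Finset.exists_mem_eq_inf' hne (fun j => g j / xSeg v S j)
    have hx0 : xSeg v S j0 ≠ 0 := ne_of_gt (xSeg_pos v hv0 hv hne hj0)
    have : g' j0 = 0 := by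
      rw [hg']
      rw [← ht] at hj0e
      rw [hj0e]
      field_simp
      ring
    refine Finset.ssubset_iff_of_subset hsub |>.2 ⟨j0, hj0, ?_⟩
    intro hc
    exact (mem_fsupp.1 hc) this
  have hrev' : ∀ i, rev v g' i = rev v g i - t * rev v (xSeg v S) i := by
    intro i
    unfold rev
    rw [show ∑ j ∈ Finset.Ici i, g' j = ∑ j ∈ Finset.Ici i, g j - t * ∑ j ∈ Finset.Ici i, xSeg v S j by
      rw [Finset.mul_sum, ← Finset.sum_sub_distrib]]
    ring
  have claimA : ∀ i' ∈ S, rev v g' i' ≤ rev v g' istar := by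
    intro i' hi'
    rw [hrev' i', hrev' istar, rev_xSeg_eq_of_mem v hv0 hne hi', rev_xSeg_eq_of_mem v hv0 hne histar]
    linarith [hOPT i']
  have hOPT' : ∀ i, rev v g' i ≤ rev v g' istar := by
    intro i
    by_cases hfil : (S.filter (fun i' => i ≤ i')).Nonempty
    · set i' := (S.filter (fun i' => i ≤ i')).min' hfil with hi'
      have hmem' := (S.filter (fun i' => i ≤ i')).min'_mem hfil
      have hi'S : i' ∈ S := (Finset.mem_filter.1 hmem').1
      have hii' : i ≤ i' := (Finset.mem_filter.1 hmem').2
      have hgS' : ∀ j, g' j ≠ 0 → j ∈ S := fun j hj => hsub (mem_fsupp.2 hj)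
      have htail : ∑ l ∈ Finset.Ici i, g' l = ∑ l ∈ Finset.Ici i', g' l :=
        tail_shift hgS' hfil
      have hT : 0 ≤ ∑ l ∈ Finset.Ici i', g' l := Finset.sum_nonneg fun l _ => hg'nn l
      have h1 : rev v g' i ≤ rev v g' i' := by
        rw [rev, rev, htail]
        exact mul_le_mul_of_nonneg_right (hv.monotone hii') hT
      exact le_trans h1 (claimA i' hi'S)
    · have hgS' : ∀ j, g' j ≠ 0 → j ∈ S := fun j hj => hsub (mem_fsupp.2 hj)
      have htail : ∑ l ∈ Finset.Ici i, g' l = 0 := tail_zero hgS' hfil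
      rw [rev, htail, mul_zero]
      exact rev_nonneg v hv0 hg'nn istar
  have hmass : ∑ j, g' j = (∑ j, g j) - t := by
    rw [hg']
    rw [Finset.sum_sub_distrib, ← Finset.mul_sum, sum_xSeg_one v hv0 hne, mul_one]
  exact ⟨t, htpos, hg'nn, hssub, hOPT', hmass⟩

lemma chain_exists (hv0 : ∀ k, 0 < v k) (hv : StrictMono v) (istar : Fin K) :
    ∀ (N : ℕ) (g : Fin K → ℝ), (fsupp g).card ≤ N → (∀ j, 0 ≤ g j) →
      (∀ i, rev v g i ≤ rev v g istar) →
      ∃ (n : ℕ) (S : ℕ → Finset (Fin K)) (t : ℕ → ℝ),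
        (∀ s < n, (S s).Nonempty) ∧
        (∀ s < n, 0 < t s) ∧
        (∀ s < n, istar ∈ S s) ∧
        (∀ s, s + 1 < n → S (s+1) ⊂ S s) ∧
        (0 < n → S 0 = fsupp g) ∧
        (∑ s ∈ Finset.range n, t s = ∑ j, g j) ∧
        (∀ j, ∑ s ∈ Finset.range n, t s * xSeg v (S s) j = g j) := by
  intro N
  induction N with
  | zero =>
    intro g hcard hg hOPT
    have hemp : fsupp g = ∅ := Finset.card_eq_zero.1 (Nat.le_zero.1 hcard)
    have hzero : ∀ j, g j = 0 := by
      intro j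
      by_contra h
      have : j ∈ fsupp g := mem_fsupp.2 h
      simp [hemp] at this
    refine ⟨0, fun _ => ∅, fun _ => 0, fun s hs => absurd hs (Nat.not_lt_zero s),
      fun s hs => absurd hs (Nat.not_lt_zero s), fun s hs => absurd hs (Nat.not_lt_zero s),
      fun s hs => absurd hs (by omega), fun h => absurd h (by omega), ?_, ?_⟩
    · rw [Finset.sum_range_zero]
      exact (Finset.sum_eq_zero fun j _ => hzero j).symm
    · intro j
      rw [Finset.sum_range_zero]
      exact (hzero j).symm
  | succ N IH =>
    intro g hcard hg hOPT
    rcases Finset.eq_empty_or_nonempty (fsupp g) with hemp | hne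
    · have hzero : ∀ j, g j = 0 := by
        intro j
        by_contra h
        have : j ∈ fsupp g := mem_fsupp.2 h
        simp [hemp] at this
      refine ⟨0, fun _ => ∅, fun _ => 0, fun s hs => absurd hs (Nat.not_lt_zero s),
        fun s hs => absurd hs (Nat.not_lt_zero s), fun s hs => absurd hs (Nat.not_lt_zero s),
        fun s hs => absurd hs (by omega), fun h => absurd h (by omega), ?_, ?_⟩
      · rw [Finset.sum_range_zero]
        exact (Finset.sum_eq_zero fun j _ => hzero j).symm
      · intro j
        rw [Finset.sum_range_zero]
        exact (hzero j).symm
    · obtain ⟨t0, ht0, hnn', hssub, hOPT', hmass⟩ := chain_step v hv0 hv hg hOPT hne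
      set g' := fun j => g j - t0 * xSeg v (fsupp g) j with hg'
      have hcard' : (fsupp g').card ≤ N := by
        have := Finset.card_lt_card hssub
        omega
      obtain ⟨n, S, t, hSne, htpos, hmem, hdec, hS0, hsum, hpt⟩ := IH g' hcard' hnn' hOPT'
      refine ⟨n + 1, fun s => if s = 0 then fsupp g else S (s - 1),
        fun s => if s = 0 then t0 else t (s - 1), ?_, ?_, ?_, ?_, ?_, ?_, ?_⟩
      · intro s hs
        by_cases h : s = 0
        · simpa [h] using hne
        · simp only [if_neg h]
          exact hSne (s - 1) (by omega)
      · intro s hs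
        by_cases h : s = 0
        · simpa [h] using ht0
        · simp only [if_neg h]
          exact htpos (s - 1) (by omega)
      · intro s hs
        by_cases h : s = 0
        · simpa [h] using istar_mem_fsupp v hv0 hv hg hOPT hne
        · simp only [if_neg h]
          exact hmem (s - 1) (by omega)
      · intro s hs
        by_cases h : s = 0
        · subst h
          simp only [if_pos rfl, if_neg (by omega : (0:ℕ) + 1 ≠ 0)]
          have h1 : S 0 = fsupp g' := hS0 (by omega)
          simpa [h1] using hssub
        · simp only [if_neg h, if_neg (by omega : s + 1 ≠ 0)]
          have : (s - 1) + 1 = (s+1) - 1 := by omega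
          rw [show s + 1 - 1 = (s - 1) + 1 by omega]
          exact hdec (s - 1) (by omega)
      · intro _; simp
      · rw [Finset.sum_range_succ']
        simp only [if_neg (Nat.succ_ne_zero _), if_pos rfl, Nat.add_sub_cancel]
        rw [hsum, hmass]
        norm_num
      · intro j
        rw [Finset.sum_range_succ']
        simp only [if_neg (Nat.succ_ne_zero _), if_pos rfl, Nat.add_sub_cancel]
        rw [hpt j]
        simp [hg']

end Chain2

section Master
variable {K : ℕ}

/-- column weight -/
noncomputable def colw (n : ℕ) (W : ℕ → Fin K → ℝ) (k : Fin K) : ℝ :=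
  ∑ s ∈ Finset.range n, W s k

/-- column (merged) market -/
noncomputable def colm (n : ℕ) (W : ℕ → Fin K → ℝ) (z : ℕ → Fin K → ℝ) (k : Fin K) :
    Fin K → ℝ :=
  fun j => (colw n W k)⁻¹ * ∑ s ∈ Finset.range n, W s k * z s j

lemma master (v : Fin K → ℝ) (hv0 : ∀ k, 0 < v k) (istar : Fin K) (xstar : Fin K → ℝ)
    (n : ℕ) (z : ℕ → Fin K → ℝ) (t : ℕ → ℝ)
    (hz : ∀ s < n, IsMarket K (z s))
    (htsum : ∑ s ∈ Finset.range n, t s = 1)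
    (hcomb : ∀ j, ∑ s ∈ Finset.range n, t s * z s j = xstar j)
    (W : ℕ → Fin K → ℝ)
    (hWnn : ∀ s, s < n → ∀ k, 0 ≤ W s k)
    (hWrow : ∀ s < n, ∑ k, W s k = t s)
    (hWopt : ∀ s, s < n → ∀ k, W s k ≠ 0 →
      OptPrice v (z s) k ∧ rev v (z s) k = rev v (z s) istar)
    (hinj : ∀ k k', k ≠ k' → colw n W k ≠ 0 → colw n W k' ≠ 0 →
      colm n W z k ≠ colm n W z k') :
    ∃ (A : Finset (Fin K)) (xs : Fin K → Fin K → ℝ) (w : Fin K → ℝ),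
      IsDirectSeg v xstar A xs w ∧
      directCS v A xs w = ∑ s ∈ Finset.range n, ∑ k, W s k * csf v (z s) k ∧
      directPS v A xs w = rev v xstar istar := by
  classical
  set A : Finset (Fin K) := Finset.univ.filter (fun k => colw n W k ≠ 0) with hA
  have hmemA : ∀ k, k ∈ A ↔ colw n W k ≠ 0 := by intro k; simp [hA]
  have hcwnn : ∀ k, 0 ≤ colw n W k :=
    fun k => Finset.sum_nonneg fun s hs => hWnn s (Finset.mem_range.1 hs) k
  have hcwpos : ∀ k ∈ A, 0 < colw n W k := fun k hk =>
    lt_of_le_of_ne (hcwnn k) (Ne.symm ((hmemA k).1 hk))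
  have hWz : ∀ k, colw n W k = 0 → ∀ s ∈ Finset.range n, W s k = 0 := by
    intro k hk
    exact (Finset.sum_eq_zero_iff_of_nonneg
      (fun s hs => hWnn s (Finset.mem_range.1 hs) k)).1 hk
  have hcolm : ∀ k, colm n W z k = fun j => ∑ s ∈ Finset.range n, ((colw n W k)⁻¹ * W s k) * z s j := by
    intro k
    funext j
    rw [colm, Finset.mul_sum]
    exact Finset.sum_congr rfl fun s _ => by ring
  -- rev of a column
  have hrevcol : ∀ k i, rev v (colm n W z k) i
      = ∑ s ∈ Finset.range n, ((colw n W k)⁻¹ * W s k) * rev v (z s) i := by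
    intro k i
    rw [hcolm k, rev_linear]
  have hcsfcol : ∀ k i, csf v (colm n W z k) i
      = ∑ s ∈ Finset.range n, ((colw n W k)⁻¹ * W s k) * csf v (z s) i := by
    intro k i
    rw [hcolm k, csf_linear]
  refine ⟨A, colm n W z, colw n W, ⟨?_, ?_, ?_, ?_, ?_, ?_⟩, ?_, ?_⟩
  · -- InjOn
    intro k hk k' hk' he
    by_contra hne
    exact hinj k k' hne ((hmemA k).1 hk) ((hmemA k').1 hk') he
  · -- markets
    intro k hk
    constructor
    · intro j
      apply mul_nonneg (inv_nonneg.2 (hcwnn k))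
      apply Finset.sum_nonneg
      intro s hs
      exact mul_nonneg (hWnn s (Finset.mem_range.1 hs) k) ((hz s (Finset.mem_range.1 hs)).1 j)
    · show ∑ j, (colw n W k)⁻¹ * ∑ s ∈ Finset.range n, W s k * z s j = 1
      have : ∑ j, (colw n W k)⁻¹ * ∑ s ∈ Finset.range n, W s k * z s j
          = (colw n W k)⁻¹ * ∑ s ∈ Finset.range n, W s k * (∑ j, z s j) := by
        rw [← Finset.mul_sum]
        congr 1
        rw [Finset.sum_comm]
        exact Finset.sum_congr rfl fun s _ => by rw [Finset.mul_sum]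
      rw [this]
      have h2 : ∑ s ∈ Finset.range n, W s k * (∑ j, z s j) = colw n W k := by
        rw [colw]
        apply Finset.sum_congr rfl
        intro s hs
        by_cases hW : W s k = 0
        · rw [hW]; ring
        · rw [(hz s (Finset.mem_range.1 hs)).2, mul_one]
      rw [h2, inv_mul_cancel₀ ((hmemA k).1 hk)]
  · -- optimal prices
    intro k hk i
    rw [hrevcol k i, hrevcol k k]
    apply Finset.sum_le_sum
    intro s hs
    by_cases hW : W s k = 0
    · rw [hW]; simp
    · have hopt := (hWopt s (Finset.mem_range.1 hs) k hW).1
      have hc : 0 ≤ (colw n W k)⁻¹ * W s k :=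
        mul_nonneg (inv_nonneg.2 (hcwnn k)) (hWnn s (Finset.mem_range.1 hs) k)
      exact mul_le_mul_of_nonneg_left (hopt i) hc
  · exact hcwpos
  · -- sum of weights
    have h1 : ∑ k ∈ A, colw n W k = ∑ k, colw n W k := by
      apply Finset.sum_subset (Finset.subset_univ _)
      intro k _ hk
      by_contra h
      exact hk ((hmemA k).2 h)
    have h2 : ∑ k, colw n W k = ∑ s ∈ Finset.range n, t s := by
      unfold colw
      rw [Finset.sum_comm]
      exact Finset.sum_congr rfl fun s hs => hWrow s (Finset.mem_range.1 hs)
    rw [h1, h2, htsum]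
  · -- combination
    funext j
    rw [Finset.sum_apply]
    have hterm : ∀ k ∈ A, (colw n W k • colm n W z k) j
        = ∑ s ∈ Finset.range n, W s k * z s j := by
      intro k hk
      have hcw := (hmemA k).1 hk
      show colw n W k * ((colw n W k)⁻¹ * ∑ s ∈ Finset.range n, W s k * z s j) = _
      rw [← mul_assoc, mul_inv_cancel₀ hcw, one_mul]
    rw [Finset.sum_congr rfl hterm]
    have hext : ∑ k ∈ A, ∑ s ∈ Finset.range n, W s k * z s j
        = ∑ k, ∑ s ∈ Finset.range n, W s k * z s j := by
      apply Finset.sum_subset (Finset.subset_univ _)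
      intro k _ hk
      have hcw : colw n W k = 0 := by
        by_contra h; exact hk ((hmemA k).2 h)
      apply Finset.sum_eq_zero
      intro s hs
      rw [hWz k hcw s hs, zero_mul]
    rw [hext, Finset.sum_comm]
    rw [← hcomb j]
    apply Finset.sum_congr rfl
    intro s hs
    rw [← Finset.sum_mul, hWrow s (Finset.mem_range.1 hs)]
  · -- CS
    unfold directCS
    have hterm : ∀ k ∈ A, colw n W k * ∑ j ∈ Finset.Ici k, (v j - v k) * colm n W z k j
        = ∑ s ∈ Finset.range n, W s k * csf v (z s) k := by
      intro k hk
      have hcw := (hmemA k).1 hk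
      have : ∑ j ∈ Finset.Ici k, (v j - v k) * colm n W z k j = csf v (colm n W z k) k := rfl
      rw [this, hcsfcol k k, Finset.mul_sum]
      apply Finset.sum_congr rfl
      intro s _
      rw [← mul_assoc, ← mul_assoc, mul_inv_cancel₀ hcw, one_mul]
    rw [Finset.sum_congr rfl hterm]
    have hext : ∑ k ∈ A, ∑ s ∈ Finset.range n, W s k * csf v (z s) k
        = ∑ k, ∑ s ∈ Finset.range n, W s k * csf v (z s) k := by
      apply Finset.sum_subset (Finset.subset_univ _)
      intro k _ hk
      have hcw : colw n W k = 0 := by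
        by_contra h; exact hk ((hmemA k).2 h)
      apply Finset.sum_eq_zero
      intro s hs
      rw [hWz k hcw s hs, zero_mul]
    rw [hext, Finset.sum_comm]
  · -- PS
    unfold directPS
    have hterm : ∀ k ∈ A, colw n W k * (v k * ∑ j ∈ Finset.Ici k, colm n W z k j)
        = ∑ s ∈ Finset.range n, W s k * rev v (z s) istar := by
      intro k hk
      have hcw := (hmemA k).1 hk
      have : v k * ∑ j ∈ Finset.Ici k, colm n W z k j = rev v (colm n W z k) k := rfl
      rw [this, hrevcol k k, Finset.mul_sum]
      apply Finset.sum_congr rfl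
      intro s hs
      by_cases hW : W s k = 0
      · rw [hW]; ring
      · rw [(hWopt s (Finset.mem_range.1 hs) k hW).2, ← mul_assoc, ← mul_assoc,
          mul_inv_cancel₀ hcw, one_mul]
    rw [Finset.sum_congr rfl hterm]
    have hext : ∑ k ∈ A, ∑ s ∈ Finset.range n, W s k * rev v (z s) istar
        = ∑ k, ∑ s ∈ Finset.range n, W s k * rev v (z s) istar := by
      apply Finset.sum_subset (Finset.subset_univ _)
      intro k _ hk
      have hcw : colw n W k = 0 := by
        by_contra h; exact hk ((hmemA k).2 h)
      apply Finset.sum_eq_zero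
      intro s hs
      rw [hWz k hcw s hs, zero_mul]
    rw [hext, Finset.sum_comm]
    have hxs : xstar = fun j => ∑ s ∈ Finset.range n, t s * z s j :=
      funext fun j => (hcomb j).symm
    rw [hxs, rev_linear]
    apply Finset.sum_congr rfl
    intro s hs
    rw [← Finset.sum_mul, hWrow s (Finset.mem_range.1 hs)]

end Master

section Schemes
variable {K : ℕ}

/-- bundled chain hypotheses -/
def ChainHyp (v : Fin K → ℝ) (istar : Fin K) (xstar : Fin K → ℝ)
    (n : ℕ) (S : ℕ → Finset (Fin K)) (t : ℕ → ℝ) : Prop :=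
  (∀ s < n, (S s).Nonempty) ∧ (∀ s < n, 0 < t s) ∧ (∀ s < n, istar ∈ S s) ∧
  (∀ s, s + 1 < n → S (s+1) ⊂ S s) ∧ (S 0 = Finset.univ) ∧
  (∑ s ∈ Finset.range n, t s = 1) ∧
  (∀ j, ∑ s ∈ Finset.range n, t s * xSeg v (S s) j = xstar j) ∧ 2 ≤ n

variable (v : Fin K → ℝ) (istar : Fin K) (xstar : Fin K → ℝ)
    (n : ℕ) (S : ℕ → Finset (Fin K)) (t : ℕ → ℝ)

lemma chain_mono (hch : ChainHyp v istar xstar n S t) :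
    ∀ s s', s ≤ s' → s' < n → S s' ⊆ S s := by
  obtain ⟨h1, h2, h3, hdec, h5, h6, h7, h8⟩ := hch
  intro s s' hss' hs'
  obtain ⟨m, rfl⟩ := Nat.exists_eq_add_of_le hss'
  clear hss'
  induction m with
  | zero => simp
  | succ m IHm =>
    have h0 : s + m < n := by omega
    exact subset_trans (hdec (s+m) (by omega)).subset (IHm (by omega))

lemma rev_z_le (hv0 : ∀ k, 0 < v k) (hv : StrictMono v)
    (hch : ChainHyp v istar xstar n S t) {s : ℕ} (hs : s < n) (k : Fin K) :
    rev v (xSeg v (S s)) k ≤ rev v (xSeg v (S s)) istar := by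
  obtain ⟨h1, h2, h3, hdec, h5, h6, h7, h8⟩ := hch
  rw [rev_xSeg_eq_of_mem v hv0 (h1 s hs) (h3 s hs)]
  exact rev_xSeg_le v hv0 hv (h1 s hs) k

lemma rev_z_lt (hv0 : ∀ k, 0 < v k) (hv : StrictMono v)
    (hch : ChainHyp v istar xstar n S t) {s : ℕ} (hs : s < n) {k : Fin K} (hk : k ∉ S s) :
    rev v (xSeg v (S s)) k < rev v (xSeg v (S s)) istar := by
  obtain ⟨h1, h2, h3, hdec, h5, h6, h7, h8⟩ := hch
  rw [rev_xSeg_eq_of_mem v hv0 (h1 s hs) (h3 s hs)]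
  exact rev_xSeg_lt_of_not_mem v hv0 hv (h1 s hs) hk

lemma rev_z_eq (hv0 : ∀ k, 0 < v k) (hv : StrictMono v)
    (hch : ChainHyp v istar xstar n S t) {s : ℕ} (hs : s < n) {k : Fin K} (hk : k ∈ S s) :
    rev v (xSeg v (S s)) k = rev v (xSeg v (S s)) istar := by
  obtain ⟨h1, h2, h3, hdec, h5, h6, h7, h8⟩ := hch
  rw [rev_xSeg_eq_of_mem v hv0 (h1 s hs) (h3 s hs),
    rev_xSeg_eq_of_mem v hv0 (h1 s hs) hk]

/-- separation by a missing optimal price -/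
lemma colm_ne_of_missing (hv0 : ∀ k, 0 < v k) (hv : StrictMono v)
    (hch : ChainHyp v istar xstar n S t)
    (W : ℕ → Fin K → ℝ) (hWnn : ∀ s, s < n → ∀ k, 0 ≤ W s k)
    (hWopt : ∀ s, s < n → ∀ k, W s k ≠ 0 → k ∈ S s)
    {k k' : Fin K}
    (hck : colw n W k ≠ 0) (hck' : colw n W k' ≠ 0)
    (hmiss : ∃ s, s < n ∧ W s k' ≠ 0 ∧ k ∉ S s) :
    colm n W (fun s => xSeg v (S s)) k ≠ colm n W (fun s => xSeg v (S s)) k' := by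
  intro he
  set z : ℕ → Fin K → ℝ := fun s => xSeg v (S s) with hz
  have hcolm : ∀ kk, colm n W z kk = fun j => ∑ s ∈ Finset.range n, ((colw n W kk)⁻¹ * W s kk) * z s j := by
    intro kk
    funext j
    rw [colm, Finset.mul_sum]
    exact Finset.sum_congr rfl fun s _ => by ring
  have hrevcol : ∀ kk i, rev v (colm n W z kk) i
      = ∑ s ∈ Finset.range n, ((colw n W kk)⁻¹ * W s kk) * rev v (z s) i := by
    intro kk i
    rw [hcolm kk, rev_linear]
  have hcwnn : ∀ kk, 0 ≤ colw n W kk :=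
    fun kk => Finset.sum_nonneg fun s hs => hWnn s (Finset.mem_range.1 hs) kk
  have h1 : rev v (colm n W z k) k = rev v (colm n W z k) istar := by
    rw [hrevcol, hrevcol]
    apply Finset.sum_congr rfl
    intro s hs
    by_cases hW : W s k = 0
    · rw [hW]; ring
    · rw [rev_z_eq v istar xstar n S t hv0 hv hch (Finset.mem_range.1 hs)
        (hWopt s (Finset.mem_range.1 hs) k hW)]
  have h2 : rev v (colm n W z k') k < rev v (colm n W z k') istar := by
    rw [hrevcol, hrevcol]
    obtain ⟨s0, hs0, hW0, hk0⟩ := hmiss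
    apply Finset.sum_lt_sum
    · intro s hs
      have hc : 0 ≤ (colw n W k')⁻¹ * W s k' :=
        mul_nonneg (inv_nonneg.2 (hcwnn k')) (hWnn s (Finset.mem_range.1 hs) k')
      exact mul_le_mul_of_nonneg_left
        (rev_z_le v istar xstar n S t hv0 hv hch (Finset.mem_range.1 hs) k) hc
    · refine ⟨s0, Finset.mem_range.2 hs0, ?_⟩
      have hWpos : 0 < W s0 k' := lt_of_le_of_ne (hWnn s0 hs0 k') (Ne.symm hW0)
      have hcw' : 0 < colw n W k' := lt_of_le_of_ne (hcwnn k') (Ne.symm hck')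
      have hc : 0 < (colw n W k')⁻¹ * W s0 k' := mul_pos (inv_pos.2 hcw') hWpos
      exact mul_lt_mul_of_pos_left (rev_z_lt v istar xstar n S t hv0 hv hch hs0 hk0) hc
  rw [he] at h1
  linarith

/-- separation by a coordinate where one column vanishes and the other is positive -/
lemma colm_ne_of_point (hv0 : ∀ k, 0 < v k) (hv : StrictMono v)
    (hch : ChainHyp v istar xstar n S t)
    (W : ℕ → Fin K → ℝ) (hWnn : ∀ s, s < n → ∀ k, 0 ≤ W s k)
    {k k' : Fin K} (j : Fin K)
    (h0 : ∀ s, s < n → W s k ≠ 0 → j ∉ S s)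
    (hpos : ∃ s, s < n ∧ W s k' ≠ 0 ∧ j ∈ S s)
    (hck' : colw n W k' ≠ 0) :
    colm n W (fun s => xSeg v (S s)) k ≠ colm n W (fun s => xSeg v (S s)) k' := by
  obtain ⟨h1ne, h2, h3, hdec, h5, h6, h7, h8⟩ := hch
  intro he
  set z : ℕ → Fin K → ℝ := fun s => xSeg v (S s) with hz
  have hcwnn : ∀ kk, 0 ≤ colw n W kk :=
    fun kk => Finset.sum_nonneg fun s hs => hWnn s (Finset.mem_range.1 hs) kk
  have hzero : colm n W z k j = 0 := by
    rw [colm]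
    have : ∑ s ∈ Finset.range n, W s k * z s j = 0 := by
      apply Finset.sum_eq_zero
      intro s hs
      by_cases hW : W s k = 0
      · rw [hW, zero_mul]
      · rw [hz]
        simp only []
        rw [xSeg_eq_zero v (h0 s (Finset.mem_range.1 hs) hW), mul_zero]
    rw [this, mul_zero]
  have hposv : 0 < colm n W z k' j := by
    rw [colm]
    obtain ⟨s0, hs0, hW0, hj0⟩ := hpos
    have hcw' : 0 < colw n W k' := lt_of_le_of_ne (hcwnn k') (Ne.symm hck')
    apply mul_pos (inv_pos.2 hcw')
    apply Finset.sum_pos'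
    · intro s hs
      exact mul_nonneg (hWnn s (Finset.mem_range.1 hs) k') (xSeg_nonneg v hv0 hv j)
    · refine ⟨s0, Finset.mem_range.2 hs0, ?_⟩
      exact mul_pos (lt_of_le_of_ne (hWnn s0 hs0 k') (Ne.symm hW0))
        (xSeg_pos v hv0 hv (h1ne s0 hs0) hj0)
  rw [he] at hzero
  rw [hzero] at hposv
  exact lt_irrefl 0 hposv

/-- if all active columns have the same market y, then xstar = y -/
lemma xstar_eq_of_colm (hch : ChainHyp v istar xstar n S t)
    (W : ℕ → Fin K → ℝ) (hWnn : ∀ s, s < n → ∀ k, 0 ≤ W s k)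
    (hWrow : ∀ s, s < n → ∑ k, W s k = t s)
    (y : Fin K → ℝ)
    (hally : ∀ k, colw n W k ≠ 0 → colm n W (fun s => xSeg v (S s)) k = y) :
    xstar = y := by
  obtain ⟨h1ne, h2, h3, hdec, h5, h6, h7, h8⟩ := hch
  set z : ℕ → Fin K → ℝ := fun s => xSeg v (S s) with hz
  have hWz : ∀ k, colw n W k = 0 → ∀ s ∈ Finset.range n, W s k = 0 := by
    intro k hk
    exact (Finset.sum_eq_zero_iff_of_nonneg
      (fun s hs => hWnn s (Finset.mem_range.1 hs) k)).1 hk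
  have hcomb : ∀ j, ∑ k, colw n W k * colm n W z k j = xstar j := by
    intro j
    have hterm : ∀ k, colw n W k * colm n W z k j = ∑ s ∈ Finset.range n, W s k * z s j := by
      intro k
      by_cases hk : colw n W k = 0
      · rw [hk, zero_mul]
        symm
        apply Finset.sum_eq_zero
        intro s hs
        rw [hWz k hk s hs, zero_mul]
      · show colw n W k * ((colw n W k)⁻¹ * ∑ s ∈ Finset.range n, W s k * z s j) = _
        rw [← mul_assoc, mul_inv_cancel₀ hk, one_mul]
    rw [Finset.sum_congr rfl (fun k _ => hterm k), Finset.sum_comm, ← h7 j]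
    apply Finset.sum_congr rfl
    intro s hs
    rw [← Finset.sum_mul, hWrow s (Finset.mem_range.1 hs)]
  funext j
  have h1 : ∑ k, colw n W k * colm n W z k j = ∑ k, colw n W k * y j := by
    apply Finset.sum_congr rfl
    intro k _
    by_cases hk : colw n W k = 0
    · rw [hk, zero_mul, zero_mul]
    · rw [hally k hk]
  have h2 : ∑ k : Fin K, colw n W k * y j = y j := by
    rw [← Finset.sum_mul]
    have : ∑ k, colw n W k = 1 := by
      unfold colw
      rw [Finset.sum_comm]
      rw [Finset.sum_congr rfl (fun s hs => hWrow s (Finset.mem_range.1 hs)), h6]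
    rw [this, one_mul]
  rw [← hcomb j, h1, h2]

end Schemes

section Schemes2
variable {K : ℕ}

noncomputable def Wsch (istar : Fin K) (t : ℕ → ℝ) (p : ℕ → Fin K) (c : ℕ → ℝ)
    (s : ℕ) (k : Fin K) : ℝ :=
  (if k = p s then c s * t s else 0) + (if k = istar then (1 - c s) * t s else 0)

lemma sum_ite_mul (a : Fin K) (X : ℝ) (f : Fin K → ℝ) (hK : 0 < K) :
    ∑ k, (if k = a then X else 0) * f k = X * f a := by
  rw [Finset.sum_eq_single a]
  · rw [if_pos rfl]
  · intro k _ hk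
    rw [if_neg hk, zero_mul]
  · intro h
    exact absurd (Finset.mem_univ a) h

lemma Wsch_nonneg {istar : Fin K} {t : ℕ → ℝ} {p : ℕ → Fin K} {c : ℕ → ℝ} {s : ℕ}
    (hc0 : 0 ≤ c s) (hc1 : c s ≤ 1) (ht : 0 ≤ t s) (k : Fin K) :
    0 ≤ Wsch istar t p c s k := by
  unfold Wsch
  have h1 : 0 ≤ c s * t s := mul_nonneg hc0 ht
  have h2 : 0 ≤ (1 - c s) * t s := mul_nonneg (by linarith) ht
  split_ifs <;> linarith

lemma Wsch_row {istar : Fin K} {t : ℕ → ℝ} {p : ℕ → Fin K} {c : ℕ → ℝ} {s : ℕ} (hK : 0 < K) :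
    ∑ k, Wsch istar t p c s k = t s := by
  unfold Wsch
  rw [Finset.sum_add_distrib]
  rw [Finset.sum_ite_eq' Finset.univ (p s) (fun _ => c s * t s),
    Finset.sum_ite_eq' Finset.univ istar (fun _ => (1 - c s) * t s)]
  simp only [Finset.mem_univ, if_pos]
  ring

lemma Wsch_ne_imp {istar : Fin K} {t : ℕ → ℝ} {p : ℕ → Fin K} {c : ℕ → ℝ} {s : ℕ} {k : Fin K}
    (h : Wsch istar t p c s k ≠ 0) :
    (k = p s ∧ c s * t s ≠ 0) ∨ (k = istar ∧ (1 - c s) * t s ≠ 0) := by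
  by_contra hc
  push_neg at hc
  apply h
  unfold Wsch
  by_cases h1 : k = p s
  · by_cases h2 : k = istar
    · rw [if_pos h1, if_pos h2, hc.1 h1, hc.2 h2, add_zero]
    · rw [if_pos h1, if_neg h2, hc.1 h1, add_zero]
  · by_cases h2 : k = istar
    · rw [if_neg h1, if_pos h2, hc.2 h2, add_zero]
    · rw [if_neg h1, if_neg h2, add_zero]

lemma Wsch_ne_p {istar : Fin K} {t : ℕ → ℝ} {p : ℕ → Fin K} {c : ℕ → ℝ} {s : ℕ}
    (hc1 : c s ≤ 1) (ht : 0 ≤ t s) (hpos : 0 < c s * t s) :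
    Wsch istar t p c s (p s) ≠ 0 := by
  unfold Wsch
  rw [if_pos rfl]
  have h2 : 0 ≤ (1 - c s) * t s := mul_nonneg (by linarith) ht
  have : (0:ℝ) < c s * t s + (if p s = istar then (1 - c s) * t s else 0) := by
    split_ifs <;> linarith
  linarith [this]

lemma Wsch_ne_istar {istar : Fin K} {t : ℕ → ℝ} {p : ℕ → Fin K} {c : ℕ → ℝ} {s : ℕ}
    (hc0 : 0 ≤ c s) (ht : 0 ≤ t s) (hpos : 0 < (1 - c s) * t s) :
    Wsch istar t p c s istar ≠ 0 := by
  unfold Wsch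
  rw [if_pos rfl]
  have h1 : 0 ≤ c s * t s := mul_nonneg hc0 ht
  have : (0:ℝ) < (if istar = p s then c s * t s else 0) + (1 - c s) * t s := by
    split_ifs <;> linarith
  linarith [this]

variable (v : Fin K → ℝ) (istar : Fin K) (xstar : Fin K → ℝ)
    (n : ℕ) (S : ℕ → Finset (Fin K)) (t : ℕ → ℝ)

lemma scheme_master (hv0 : ∀ k, 0 < v k) (hv : StrictMono v)
    (hch : ChainHyp v istar xstar n S t)
    (p : ℕ → Fin K) (c : ℕ → ℝ)
    (hc0 : ∀ s, s < n → 0 ≤ c s) (hc1 : ∀ s, s < n → c s ≤ 1)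
    (hp : ∀ s, s < n → c s ≠ 0 → p s ∈ S s)
    (hinj : ∀ k k', k ≠ k' → colw n (Wsch istar t p c) k ≠ 0 →
      colw n (Wsch istar t p c) k' ≠ 0 →
      colm n (Wsch istar t p c) (fun s => xSeg v (S s)) k
        ≠ colm n (Wsch istar t p c) (fun s => xSeg v (S s)) k') :
    ∃ (A : Finset (Fin K)) (xs : Fin K → Fin K → ℝ) (w : Fin K → ℝ),
      IsDirectSeg v xstar A xs w ∧
      directCS v A xs w = ∑ s ∈ Finset.range n,
        t s * (c s * csf v (xSeg v (S s)) (p s) + (1 - c s) * csf v (xSeg v (S s)) istar) ∧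
      directPS v A xs w = rev v xstar istar := by
  have hch' := hch
  obtain ⟨h1ne, h2, h3, hdec, h5, h6, h7, h8⟩ := hch'
  have hK : 0 < K := istar.pos
  have hWnn : ∀ s, s < n → ∀ k, 0 ≤ Wsch istar t p c s k :=
    fun s hs k => Wsch_nonneg (hc0 s hs) (hc1 s hs) (le_of_lt (h2 s hs)) k
  have hWopt : ∀ s, s < n → ∀ k, Wsch istar t p c s k ≠ 0 →
      OptPrice v (xSeg v (S s)) k ∧
      rev v (xSeg v (S s)) k = rev v (xSeg v (S s)) istar := by
    intro s hs k hW
    rcases Wsch_ne_imp hW with ⟨hk, hct⟩ | ⟨hk, _⟩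
    · have hc : c s ≠ 0 := fun h => hct (by rw [h, zero_mul])
      have hmem : k ∈ S s := hk ▸ hp s hs hc
      exact ⟨optPrice_xSeg v hv0 hv (h1ne s hs) hmem,
        rev_z_eq v istar xstar n S t hv0 hv hch hs hmem⟩
    · have hmem : k ∈ S s := hk ▸ h3 s hs
      exact ⟨optPrice_xSeg v hv0 hv (h1ne s hs) hmem,
        rev_z_eq v istar xstar n S t hv0 hv hch hs hmem⟩
  have hmain := master v hv0 istar xstar n (fun s => xSeg v (S s)) t
    (fun s hs => ⟨fun j => xSeg_nonneg v hv0 hv j, sum_xSeg_one v hv0 (h1ne s hs)⟩)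
    h6 h7 (Wsch istar t p c) hWnn
    (fun s hs => Wsch_row hK) hWopt hinj
  obtain ⟨A, xs, w, hseg, hcs, hps⟩ := hmain
  refine ⟨A, xs, w, hseg, ?_, hps⟩
  rw [hcs]
  apply Finset.sum_congr rfl
  intro s hs
  unfold Wsch
  rw [show (∑ k, ((if k = p s then c s * t s else 0) + (if k = istar then (1 - c s) * t s else 0)) * csf v (xSeg v (S s)) k) = (∑ k, (if k = p s then c s * t s else 0) * csf v (xSeg v (S s)) k) + (∑ k, (if k = istar then (1 - c s) * t s else 0) * csf v (xSeg v (S s)) k) by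
    rw [← Finset.sum_add_distrib]
    exact Finset.sum_congr rfl fun k _ => by ring]
  rw [sum_ite_mul _ _ _ hK, sum_ite_mul _ _ _ hK]
  ring

section Schemes3
variable {K : ℕ}

lemma csf_top (v : Fin K → ℝ) (y : Fin K → ℝ) (hK : 0 < K) :
    csf v y ⟨K-1, by omega⟩ = 0 := by
  unfold csf
  apply Finset.sum_eq_zero
  intro j hj
  have h1 : j ≤ (⟨K-1, by omega⟩ : Fin K) := by
    rw [Fin.le_def]
    show (j:ℕ) ≤ K - 1
    have := j.isLt
    omega
  have h2 : (⟨K-1, by omega⟩ : Fin K) ≤ j := Finset.mem_Ici.1 hj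
  have : j = (⟨K-1, by omega⟩ : Fin K) := le_antisymm h1 h2
  rw [this, sub_self, zero_mul]

lemma csf_xSeg_max (v : Fin K → ℝ) {S : Finset (Fin K)} (hS : S.Nonempty) :
    csf v (xSeg v S) (S.max' hS) = 0 := by
  unfold csf
  apply Finset.sum_eq_zero
  intro j hj
  by_cases hjS : j ∈ S
  · have h1 : j ≤ S.max' hS := Finset.le_max' S j hjS
    have h2 : S.max' hS ≤ j := Finset.mem_Ici.1 hj
    rw [le_antisymm h1 h2, sub_self, zero_mul]
  · rw [xSeg_eq_zero v hjS, mul_zero]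

lemma min'_eq_bot (hK : 0 < K) {T : Finset (Fin K)} (hT : T.Nonempty)
    (hTu : T = Finset.univ) : T.min' hT = ⟨0, hK⟩ := by
  apply le_antisymm
  · exact Finset.min'_le _ _ (by rw [hTu]; exact Finset.mem_univ _)
  · rw [Fin.le_def]
    exact Nat.zero_le _

lemma max'_eq_top (hK : 0 < K) {T : Finset (Fin K)} (hT : T.Nonempty)
    (hTu : T = Finset.univ) : T.max' hT = ⟨K-1, by omega⟩ := by
  apply le_antisymm
  · rw [Fin.le_def]
    show _ ≤ K - 1
    have := (T.max' hT).isLt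
    omega
  · exact Finset.le_max' _ _ (by rw [hTu]; exact Finset.mem_univ _)

lemma colw_ne_imp {n : ℕ} {W : ℕ → Fin K → ℝ} {k : Fin K} (h : colw n W k ≠ 0) :
    ∃ s, s < n ∧ W s k ≠ 0 := by
  obtain ⟨s, hs, hne⟩ := Finset.exists_ne_zero_of_sum_ne_zero h
  exact ⟨s, Finset.mem_range.1 hs, hne⟩

/-- minimum price of segment s -/
noncomputable def pmin (S : ℕ → Finset (Fin K)) (istar : Fin K) (s : ℕ) : Fin K :=
  if h : (S s).Nonempty then (S s).min' h else istar

/-- maximum price of segment s -/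
noncomputable def pmax (S : ℕ → Finset (Fin K)) (istar : Fin K) (s : ℕ) : Fin K :=
  if h : (S s).Nonempty then (S s).max' h else istar

variable (v : Fin K → ℝ) (istar : Fin K) (xstar : Fin K → ℝ)
    (n : ℕ) (S : ℕ → Finset (Fin K)) (t : ℕ → ℝ)

lemma schemeI (hv0 : ∀ k, 0 < v k) (hv : StrictMono v)
    (hch : ChainHyp v istar xstar n S t) (lam : ℝ) (hl0 : 0 ≤ lam) (hl1 : lam ≤ 1)
    (hK : 0 < K)
    (hcase : lam = 1 ∨ ∃ s, s < n ∧ (⟨0, hK⟩ : Fin K) ∉ S s) :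
    ∃ (A : Finset (Fin K)) (xs : Fin K → Fin K → ℝ) (w : Fin K → ℝ),
      IsDirectSeg v xstar A xs w ∧
      directCS v A xs w = ∑ s ∈ Finset.range n,
        t s * (lam * csf v (xSeg v (S s)) (pmin S istar s)
          + (1 - lam) * csf v (xSeg v (S s)) istar) ∧
      directPS v A xs w = rev v xstar istar := by
  have hch' := hch
  obtain ⟨h1ne, h2, h3, hdec, h5, h6, h7, h8⟩ := hch'
  apply scheme_master v istar xstar n S t hv0 hv hch (pmin S istar) (fun _ => lam)
    (fun s _ => hl0) (fun s _ => hl1)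
    (fun s hs _ => by rw [pmin, dif_pos (h1ne s hs)]; exact (S s).min'_mem _)
  -- injectivity
  intro k k' hkk' hck hck'
  set W := Wsch istar t (pmin S istar) (fun _ => lam) with hW
  have hchar : ∀ kk, kk ≠ istar → ∀ s, s < n → W s kk ≠ 0 →
      kk = pmin S istar s ∧ lam * t s ≠ 0 := by
    intro kk hkki s hs hWs
    rcases Wsch_ne_imp hWs with ⟨ha, hb⟩ | ⟨ha, _⟩
    · exact ⟨ha, hb⟩
    · exact absurd ha hkki
  have key : ∀ kk, kk ≠ istar → colw n W kk ≠ 0 → colw n W istar ≠ 0 →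
      colm n W (fun s => xSeg v (S s)) kk ≠ colm n W (fun s => xSeg v (S s)) istar := by
    intro kk hkki hc1 hc2
    obtain ⟨s₀, hs₀, hW₀⟩ := colw_ne_imp hc1
    obtain ⟨hkp, hlt₀⟩ := hchar kk hkki s₀ hs₀ hW₀
    have hkmin : kk = (S s₀).min' (h1ne s₀ hs₀) := by
      rw [hkp, pmin, dif_pos (h1ne s₀ hs₀)]
    by_cases hlam1 : lam = 1
    · obtain ⟨s₁, hs₁, hW₁⟩ := colw_ne_imp hc2
      have histp : istar = pmin S istar s₁ := by
        rcases Wsch_ne_imp hW₁ with ⟨ha, _⟩ | ⟨_, hb⟩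
        · exact ha
        · exact absurd hb (by rw [hlam1]; ring_nf; simp)
      have histmin : istar = (S s₁).min' (h1ne s₁ hs₁) := by
        rw [histp, pmin, dif_pos (h1ne s₁ hs₁)]
      rcases lt_or_gt_of_ne hkki with hlt | hgt
      · -- kk < istar : kk ∉ S s₁
        apply colm_ne_of_missing v istar xstar n S t hv0 hv hch W
          (fun s hs kx => Wsch_nonneg (hl0) (hl1) (le_of_lt (h2 s hs)) kx)
          (fun s hs kx hWx => by
            rcases Wsch_ne_imp hWx with ⟨ha, hb⟩ | ⟨ha, _⟩
            · rw [ha, pmin, dif_pos (h1ne s hs)]; exact (S s).min'_mem _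
            · rw [ha]; exact h3 s hs)
          hc1 hc2
        refine ⟨s₁, hs₁, hW₁, ?_⟩
        intro hmem
        have := Finset.min'_le (S s₁) kk hmem
        rw [← histmin] at this
        exact absurd hlt (not_lt.2 this)
      · -- istar < kk : impossible since kk = min' S s₀ ≤ istar
        have := Finset.min'_le (S s₀) istar (h3 s₀ hs₀)
        rw [← hkmin] at this
        exact absurd hgt (not_lt.2 this)
    · -- lam < 1
      by_cases hmiss : ∃ s, s < n ∧ kk ∉ S s
      · obtain ⟨s₂, hs₂, hks₂⟩ := hmiss
        apply colm_ne_of_missing v istar xstar n S t hv0 hv hch W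
          (fun s hs kx => Wsch_nonneg (hl0) (hl1) (le_of_lt (h2 s hs)) kx)
          (fun s hs kx hWx => by
            rcases Wsch_ne_imp hWx with ⟨ha, hb⟩ | ⟨ha, _⟩
            · rw [ha, pmin, dif_pos (h1ne s hs)]; exact (S s).min'_mem _
            · rw [ha]; exact h3 s hs)
          hc1 hc2
        refine ⟨s₂, hs₂, ?_, hks₂⟩
        apply Wsch_ne_istar (hl0) (le_of_lt (h2 s₂ hs₂))
        have : 0 < 1 - lam := by
          rcases lt_or_eq_of_le hl1 with h | h
          · linarith
          · exact absurd h hlam1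
        exact mul_pos this (h2 s₂ hs₂)
      · push_neg at hmiss
        have hbot : ∃ s, s < n ∧ (⟨0, hK⟩ : Fin K) ∉ S s := hcase.resolve_left hlam1
        obtain ⟨s₃, hs₃, hb₃⟩ := hbot
        have hkbot : kk ≠ (⟨0, hK⟩ : Fin K) := by
          intro he
          exact hb₃ (he ▸ hmiss s₃ hs₃)
        have h01 : S 1 ⊂ S 0 := hdec 0 (by omega)
        obtain ⟨j, hj0, hj1⟩ := Finset.exists_of_ssubset h01
        apply colm_ne_of_point v istar xstar n S t hv0 hv hch W
          (fun s hs kx => Wsch_nonneg (hl0) (hl1) (le_of_lt (h2 s hs)) kx) j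
        · -- kk column misses j
          intro s hs hWs
          obtain ⟨hkp', _⟩ := hchar kk hkki s hs hWs
          have hs1 : 1 ≤ s := by
            rcases Nat.eq_zero_or_pos s with rfl | h
            · exfalso
              apply hkbot
              rw [hkp', pmin, dif_pos (h1ne 0 (by omega))]
              exact min'_eq_bot hK _ h5
            · exact h
          intro hjmem
          exact hj1 (chain_mono v istar xstar n S t hch 1 s hs1 hs hjmem)
        · -- istar column contains j via s = 0
          refine ⟨0, by omega, ?_, by rw [h5]; exact Finset.mem_univ j⟩
          apply Wsch_ne_istar (hl0) (le_of_lt (h2 0 (by omega)))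
          have : 0 < 1 - lam := by
            rcases lt_or_eq_of_le hl1 with h | h
            · linarith
            · exact absurd h hlam1
          exact mul_pos this (h2 0 (by omega))
        · exact hc2
  by_cases hk_i : k = istar
  · by_cases hk'_i : k' = istar
    · exact absurd (hk_i.trans hk'_i.symm) hkk'
    · rw [hk_i]
      exact (key k' hk'_i hck' (hk_i ▸ hck)).symm
  · by_cases hk'_i : k' = istar
    · rw [hk'_i]
      exact key k hk_i hck (hk'_i ▸ hck')
    · -- both p-columns
      obtain ⟨s, hs, hWs⟩ := colw_ne_imp hck
      obtain ⟨s', hs', hWs'⟩ := colw_ne_imp hck'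
      obtain ⟨hkp, _⟩ := hchar k hk_i s hs hWs
      obtain ⟨hkp', _⟩ := hchar k' hk'_i s' hs' hWs'
      have hWnn' : ∀ sx, sx < n → ∀ kx, 0 ≤ W sx kx :=
        fun sx hsx kx => Wsch_nonneg (hl0) (hl1) (le_of_lt (h2 sx hsx)) kx
      have hWopt' : ∀ sx, sx < n → ∀ kx, W sx kx ≠ 0 → kx ∈ S sx := by
        intro sx hsx kx hWx
        rcases Wsch_ne_imp hWx with ⟨ha, _⟩ | ⟨ha, _⟩
        · rw [ha, pmin, dif_pos (h1ne sx hsx)]; exact (S sx).min'_mem _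
        · rw [ha]; exact h3 sx hsx
      rcases lt_or_gt_of_ne hkk' with hlt | hgt
      · apply colm_ne_of_missing v istar xstar n S t hv0 hv hch W hWnn' hWopt' hck hck'
        refine ⟨s', hs', hWs', ?_⟩
        intro hmem
        have := Finset.min'_le (S s') k hmem
        rw [show (S s').min' (h1ne s' hs') = k' by rw [hkp', pmin, dif_pos (h1ne s' hs')]] at this
        exact absurd hlt (not_lt.2 this)
      · apply (colm_ne_of_missing v istar xstar n S t hv0 hv hch W hWnn' hWopt' hck' hck ?_).symm
        refine ⟨s, hs, hWs, ?_⟩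
        intro hmem
        have := Finset.min'_le (S s) k' hmem
        rw [show (S s).min' (h1ne s hs) = k by rw [hkp, pmin, dif_pos (h1ne s hs)]] at this
        exact absurd hgt (not_lt.2 this)

end Schemes3

section Schemes4
variable {K : ℕ}
variable (v : Fin K → ℝ) (istar : Fin K) (xstar : Fin K → ℝ)
    (n : ℕ) (S : ℕ → Finset (Fin K)) (t : ℕ → ℝ)

lemma schemeII (hv0 : ∀ k, 0 < v k) (hv : StrictMono v)
    (hch : ChainHyp v istar xstar n S t) (lam : ℝ) (hl0 : 0 ≤ lam) (hl1 : lam ≤ 1)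
    (hK : 0 < K)
    (hcase : lam = 1 ∨ ∃ s, s < n ∧ (⟨K-1, by omega⟩ : Fin K) ∉ S s) :
    ∃ (A : Finset (Fin K)) (xs : Fin K → Fin K → ℝ) (w : Fin K → ℝ),
      IsDirectSeg v xstar A xs w ∧
      directCS v A xs w = ∑ s ∈ Finset.range n,
        t s * (lam * csf v (xSeg v (S s)) (pmax S istar s)
          + (1 - lam) * csf v (xSeg v (S s)) istar) ∧
      directPS v A xs w = rev v xstar istar := by
  have hch' := hch
  obtain ⟨h1ne, h2, h3, hdec, h5, h6, h7, h8⟩ := hch'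
  apply scheme_master v istar xstar n S t hv0 hv hch (pmax S istar) (fun _ => lam)
    (fun s _ => hl0) (fun s _ => hl1)
    (fun s hs _ => by rw [pmax, dif_pos (h1ne s hs)]; exact (S s).max'_mem _)
  intro k k' hkk' hck hck'
  set W := Wsch istar t (pmax S istar) (fun _ => lam) with hW
  have hchar : ∀ kk, kk ≠ istar → ∀ s, s < n → W s kk ≠ 0 →
      kk = pmax S istar s ∧ lam * t s ≠ 0 := by
    intro kk hkki s hs hWs
    rcases Wsch_ne_imp hWs with ⟨ha, hb⟩ | ⟨ha, _⟩
    · exact ⟨ha, hb⟩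
    · exact absurd ha hkki
  have hWnn' : ∀ sx, sx < n → ∀ kx, 0 ≤ W sx kx :=
    fun sx hsx kx => Wsch_nonneg (hl0) (hl1) (le_of_lt (h2 sx hsx)) kx
  have hWopt' : ∀ sx, sx < n → ∀ kx, W sx kx ≠ 0 → kx ∈ S sx := by
    intro sx hsx kx hWx
    rcases Wsch_ne_imp hWx with ⟨ha, _⟩ | ⟨ha, _⟩
    · rw [ha, pmax, dif_pos (h1ne sx hsx)]; exact (S sx).max'_mem _
    · rw [ha]; exact h3 sx hsx
  have key : ∀ kk, kk ≠ istar → colw n W kk ≠ 0 → colw n W istar ≠ 0 →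
      colm n W (fun s => xSeg v (S s)) kk ≠ colm n W (fun s => xSeg v (S s)) istar := by
    intro kk hkki hc1 hc2
    obtain ⟨s₀, hs₀, hW₀⟩ := colw_ne_imp hc1
    obtain ⟨hkp, hlt₀⟩ := hchar kk hkki s₀ hs₀ hW₀
    have hkmax : kk = (S s₀).max' (h1ne s₀ hs₀) := by
      rw [hkp, pmax, dif_pos (h1ne s₀ hs₀)]
    by_cases hlam1 : lam = 1
    · obtain ⟨s₁, hs₁, hW₁⟩ := colw_ne_imp hc2
      have histp : istar = pmax S istar s₁ := by
        rcases Wsch_ne_imp hW₁ with ⟨ha, _⟩ | ⟨_, hb⟩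
        · exact ha
        · exact absurd hb (by rw [hlam1]; ring_nf; simp)
      have histmax : istar = (S s₁).max' (h1ne s₁ hs₁) := by
        rw [histp, pmax, dif_pos (h1ne s₁ hs₁)]
      rcases lt_or_gt_of_ne hkki with hlt | hgt
      · -- kk < istar : impossible since istar ≤ max' S s₀ = kk
        have := Finset.le_max' (S s₀) istar (h3 s₀ hs₀)
        rw [← hkmax] at this
        exact absurd hlt (not_lt.2 this)
      · -- istar < kk : kk ∉ S s₁
        apply colm_ne_of_missing v istar xstar n S t hv0 hv hch W hWnn' hWopt' hc1 hc2
        refine ⟨s₁, hs₁, hW₁, ?_⟩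
        intro hmem
        have := Finset.le_max' (S s₁) kk hmem
        rw [← histmax] at this
        exact absurd hgt (not_lt.2 this)
    · by_cases hmiss : ∃ s, s < n ∧ kk ∉ S s
      · obtain ⟨s₂, hs₂, hks₂⟩ := hmiss
        apply colm_ne_of_missing v istar xstar n S t hv0 hv hch W hWnn' hWopt' hc1 hc2
        refine ⟨s₂, hs₂, ?_, hks₂⟩
        apply Wsch_ne_istar (hl0) (le_of_lt (h2 s₂ hs₂))
        have : 0 < 1 - lam := by
          rcases lt_or_eq_of_le hl1 with h | h
          · linarith
          · exact absurd h hlam1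
        exact mul_pos this (h2 s₂ hs₂)
      · push_neg at hmiss
        have htop : ∃ s, s < n ∧ (⟨K-1, by omega⟩ : Fin K) ∉ S s := hcase.resolve_left hlam1
        obtain ⟨s₃, hs₃, hb₃⟩ := htop
        have hktop : kk ≠ (⟨K-1, by omega⟩ : Fin K) := by
          intro he
          exact hb₃ (he ▸ hmiss s₃ hs₃)
        have h01 : S 1 ⊂ S 0 := hdec 0 (by omega)
        obtain ⟨j, hj0, hj1⟩ := Finset.exists_of_ssubset h01
        apply colm_ne_of_point v istar xstar n S t hv0 hv hch W hWnn' j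
        · intro s hs hWs
          obtain ⟨hkp', _⟩ := hchar kk hkki s hs hWs
          have hs1 : 1 ≤ s := by
            rcases Nat.eq_zero_or_pos s with rfl | h
            · exfalso
              apply hktop
              rw [hkp', pmax, dif_pos (h1ne 0 (by omega))]
              exact max'_eq_top hK _ h5
            · exact h
          intro hjmem
          exact hj1 (chain_mono v istar xstar n S t hch 1 s hs1 hs hjmem)
        · refine ⟨0, by omega, ?_, by rw [h5]; exact Finset.mem_univ j⟩
          apply Wsch_ne_istar (hl0) (le_of_lt (h2 0 (by omega)))
          have : 0 < 1 - lam := by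
            rcases lt_or_eq_of_le hl1 with h | h
            · linarith
            · exact absurd h hlam1
          exact mul_pos this (h2 0 (by omega))
        · exact hc2
  by_cases hk_i : k = istar
  · by_cases hk'_i : k' = istar
    · exact absurd (hk_i.trans hk'_i.symm) hkk'
    · rw [hk_i]
      exact (key k' hk'_i hck' (hk_i ▸ hck)).symm
  · by_cases hk'_i : k' = istar
    · rw [hk'_i]
      exact key k hk_i hck (hk'_i ▸ hck')
    · obtain ⟨s, hs, hWs⟩ := colw_ne_imp hck
      obtain ⟨s', hs', hWs'⟩ := colw_ne_imp hck'
      obtain ⟨hkp, _⟩ := hchar k hk_i s hs hWs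
      obtain ⟨hkp', _⟩ := hchar k' hk'_i s' hs' hWs'
      rcases lt_or_gt_of_ne hkk' with hlt | hgt
      · apply (colm_ne_of_missing v istar xstar n S t hv0 hv hch W hWnn' hWopt' hck' hck ?_).symm
        refine ⟨s, hs, hWs, ?_⟩
        intro hmem
        have := Finset.le_max' (S s) k' hmem
        rw [show (S s).max' (h1ne s hs) = k by rw [hkp, pmax, dif_pos (h1ne s hs)]] at this
        exact absurd hlt (not_lt.2 this)
      · apply colm_ne_of_missing v istar xstar n S t hv0 hv hch W hWnn' hWopt' hck hck'
        refine ⟨s', hs', hWs', ?_⟩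
        intro hmem
        have := Finset.le_max' (S s') k hmem
        rw [show (S s').max' (h1ne s' hs') = k' by rw [hkp', pmax, dif_pos (h1ne s' hs')]] at this
        exact absurd hgt (not_lt.2 this)

end Schemes4

section Schemes5
variable {K : ℕ}
variable (v : Fin K → ℝ) (istar : Fin K) (xstar : Fin K → ℝ)
    (n : ℕ) (S : ℕ → Finset (Fin K)) (t : ℕ → ℝ)

lemma schemeDegA (hv0 : ∀ k, 0 < v k) (hv : StrictMono v)
    (hch : ChainHyp v istar xstar n S t) (p0 : Fin K) (sig : ℝ)
    (hs0 : 0 ≤ sig) (hs1 : sig ≤ 1)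
    (hp0 : ∀ s, s < n → p0 ∈ S s) :
    ∃ (A : Finset (Fin K)) (xs : Fin K → Fin K → ℝ) (w : Fin K → ℝ),
      IsDirectSeg v xstar A xs w ∧
      directCS v A xs w = ∑ s ∈ Finset.range n,
        t s * ((if s = 0 then 1 else sig) * csf v (xSeg v (S s)) p0
          + (1 - (if s = 0 then 1 else sig)) * csf v (xSeg v (S s)) istar) ∧
      directPS v A xs w = rev v xstar istar := by
  have hch' := hch
  obtain ⟨h1ne, h2, h3, hdec, h5, h6, h7, h8⟩ := hch'
  set c : ℕ → ℝ := fun s => if s = 0 then 1 else sig with hc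
  apply scheme_master v istar xstar n S t hv0 hv hch (fun _ => p0) c
    (fun s _ => by by_cases h : s = 0 <;> simp [hc, h, hs0])
    (fun s _ => by by_cases h : s = 0 <;> simp [hc, h, hs1])
    (fun s hs _ => hp0 s hs)
  intro k k' hkk' hck hck'
  set W := Wsch istar t (fun _ => p0) c with hW
  have hWnn' : ∀ sx, sx < n → ∀ kx, 0 ≤ W sx kx := by
    intro sx hsx kx
    apply Wsch_nonneg _ _ (le_of_lt (h2 sx hsx)) kx
    · by_cases h : sx = 0 <;> simp [hc, h, hs0]
    · by_cases h : sx = 0 <;> simp [hc, h, hs1]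
  have hmemk : ∀ kk, colw n W kk ≠ 0 → kk = p0 ∨ kk = istar := by
    intro kk h
    obtain ⟨s, hs, hWs⟩ := colw_ne_imp h
    rcases Wsch_ne_imp hWs with ⟨ha, _⟩ | ⟨ha, _⟩
    · exact Or.inl ha
    · exact Or.inr ha
  have key : ∀ (hp0i : p0 ≠ istar), colw n W istar ≠ 0 → colw n W p0 ≠ 0 →
      colm n W (fun s => xSeg v (S s)) istar ≠ colm n W (fun s => xSeg v (S s)) p0 := by
    intro hp0i hci hcp
    have h01 : S 1 ⊂ S 0 := hdec 0 (by omega)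
    obtain ⟨j, hj0, hj1⟩ := Finset.exists_of_ssubset h01
    apply colm_ne_of_point v istar xstar n S t hv0 hv hch W hWnn' j
    · -- istar column: only s ≥ 1 contribute
      intro s hs hWs
      rcases Wsch_ne_imp hWs with ⟨ha, _⟩ | ⟨_, hb⟩
      · exact absurd ha.symm hp0i
      · have hs1 : 1 ≤ s := by
          rcases Nat.eq_zero_or_pos s with rfl | h
          · exfalso; apply hb; simp [hc]
          · exact h
        intro hjmem
        exact hj1 (chain_mono v istar xstar n S t hch 1 s hs1 hs hjmem)
    · -- p0 column contains s = 0
      refine ⟨0, by omega, ?_, by rw [h5]; exact Finset.mem_univ j⟩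
      have : (0:ℝ) < c 0 * t 0 := by
        simp only [hc, if_pos rfl]
        simpa using h2 0 (by omega)
      exact Wsch_ne_p (by simp [hc]) (le_of_lt (h2 0 (by omega))) this
    · exact hcp
  rcases hmemk k hck with hk | hk <;> rcases hmemk k' hck' with hk' | hk'
  · exact absurd (hk.trans hk'.symm) hkk'
  · -- k = p0, k' = istar
    have hp0i : p0 ≠ istar := by
      intro he; exact hkk' (by rw [hk, hk', he])
    rw [hk, hk']
    exact (key hp0i (hk' ▸ hck') (hk ▸ hck)).symm
  · -- k = istar, k' = p0
    have hp0i : p0 ≠ istar := by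
      intro he; exact hkk' (by rw [hk, hk', he])
    rw [hk, hk']
    exact key hp0i (hk ▸ hck) (hk' ▸ hck')
  · exact absurd (hk.trans hk'.symm) hkk'

lemma schemeDegB (hv0 : ∀ k, 0 < v k) (hv : StrictMono v)
    (hch : ChainHyp v istar xstar n S t)
    (hneq : xstar ≠ xSeg v Finset.univ) (p0 : Fin K) (mu : ℝ)
    (hm0 : 0 ≤ mu) (hm1 : mu ≤ 1) :
    ∃ (A : Finset (Fin K)) (xs : Fin K → Fin K → ℝ) (w : Fin K → ℝ),
      IsDirectSeg v xstar A xs w ∧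
      directCS v A xs w = ∑ s ∈ Finset.range n,
        t s * ((if s = 0 then mu else 0) * csf v (xSeg v (S s)) p0
          + (1 - (if s = 0 then mu else 0)) * csf v (xSeg v (S s)) istar) ∧
      directPS v A xs w = rev v xstar istar := by
  have hch' := hch
  obtain ⟨h1ne, h2, h3, hdec, h5, h6, h7, h8⟩ := hch'
  set c : ℕ → ℝ := fun s => if s = 0 then mu else 0 with hc
  apply scheme_master v istar xstar n S t hv0 hv hch (fun _ => p0) c
    (fun s _ => by by_cases h : s = 0 <;> simp [hc, h, hm0])
    (fun s _ => by by_cases h : s = 0 <;> simp [hc, h, hm1])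
    (fun s hs hcs => by
      rcases Nat.eq_zero_or_pos s with rfl | h
      · rw [h5]; exact Finset.mem_univ _
      · exfalso; apply hcs; simp [hc]; omega)
  intro k k' hkk' hck hck'
  set W := Wsch istar t (fun _ => p0) c with hW
  have hWnn' : ∀ sx, sx < n → ∀ kx, 0 ≤ W sx kx := by
    intro sx hsx kx
    apply Wsch_nonneg _ _ (le_of_lt (h2 sx hsx)) kx
    · by_cases h : sx = 0 <;> simp [hc, h, hm0]
    · by_cases h : sx = 0 <;> simp [hc, h, hm1]
  have hWrow' : ∀ s, s < n → ∑ kx, W s kx = t s := fun s hs => Wsch_row istar.pos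
  have hmemk : ∀ kk, colw n W kk ≠ 0 → kk = p0 ∨ kk = istar := by
    intro kk h
    obtain ⟨s, hs, hWs⟩ := colw_ne_imp h
    rcases Wsch_ne_imp hWs with ⟨ha, _⟩ | ⟨ha, _⟩
    · exact Or.inl ha
    · exact Or.inr ha
  have key : ∀ (hp0i : p0 ≠ istar), colw n W p0 ≠ 0 → colw n W istar ≠ 0 →
      colm n W (fun s => xSeg v (S s)) p0 ≠ colm n W (fun s => xSeg v (S s)) istar := by
    intro hp0i hcp hci he
    -- every s ≥ 1 has W s p0 = 0
    have hW0 : ∀ s, s ≠ 0 → W s p0 = 0 := by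
      intro s hs
      show (if p0 = p0 then c s * t s else 0) + (if p0 = istar then (1 - c s) * t s else 0) = 0
      rw [if_pos rfl, if_neg hp0i, add_zero, hc]
      simp [hs]
    have hcw : colw n W p0 = mu * t 0 := by
      rw [colw, Finset.sum_eq_single_of_mem 0 (Finset.mem_range.2 (by omega))]
      · show (if p0 = p0 then c 0 * t 0 else 0) + (if p0 = istar then (1 - c 0) * t 0 else 0) = mu * t 0
        rw [if_pos rfl, if_neg hp0i, add_zero, hc]
        simp
      · intro s _ hs
        exact hW0 s hs
    have hmt : mu * t 0 ≠ 0 := by rw [← hcw]; exact hcp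
    have hcolmp : colm n W (fun s => xSeg v (S s)) p0 = xSeg v (S 0) := by
      funext j
      rw [colm, Finset.sum_eq_single_of_mem 0 (Finset.mem_range.2 (by omega))]
      · show (colw n W p0)⁻¹ * (W 0 p0 * xSeg v (S 0) j) = xSeg v (S 0) j
        have hW00 : W 0 p0 = mu * t 0 := by
          show (if p0 = p0 then c 0 * t 0 else 0) + (if p0 = istar then (1 - c 0) * t 0 else 0) = mu * t 0
          rw [if_pos rfl, if_neg hp0i, add_zero, hc]
          simp
        rw [hcw, hW00, ← mul_assoc, inv_mul_cancel₀ hmt, one_mul]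
      · intro s _ hs
        rw [hW0 s hs, zero_mul]
    have hall : ∀ kk, colw n W kk ≠ 0 →
        colm n W (fun s => xSeg v (S s)) kk = xSeg v (S 0) := by
      intro kk h
      rcases hmemk kk h with h' | h'
      · rw [h', hcolmp]
      · rw [h', ← he, hcolmp]
    have := xstar_eq_of_colm v istar xstar n S t hch W hWnn' hWrow' (xSeg v (S 0)) hall
    rw [h5] at this
    exact hneq this
  rcases hmemk k hck with hk | hk <;> rcases hmemk k' hck' with hk' | hk'
  · exact absurd (hk.trans hk'.symm) hkk'
  · have hp0i : p0 ≠ istar := by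
      intro he; exact hkk' (by rw [hk, hk', he])
    rw [hk, hk']
    exact key hp0i (hk ▸ hck) (hk' ▸ hck')
  · have hp0i : p0 ≠ istar := by
      intro he; exact hkk' (by rw [hk, hk', he])
    rw [hk, hk']
    exact (key hp0i (hk' ▸ hck') (hk ▸ hck)).symm
  · exact absurd (hk.trans hk'.symm) hkk'

end Schemes5

section Assembly
variable {K : ℕ}

lemma sum_ite_zero_split {n : ℕ} (hn : 0 < n) (X Y : ℕ → ℝ) :
    ∑ s ∈ Finset.range n, (if s = 0 then X s else Y s)
      = ∑ s ∈ Finset.range n, Y s + (X 0 - Y 0) := by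
  have h1 : ∀ s ∈ Finset.range n, (if s = 0 then X s else Y s)
      = Y s + (if s = 0 then X s - Y s else 0) := by
    intro s _
    by_cases h : s = 0
    · rw [if_pos h, if_pos h, h]; ring
    · rw [if_neg h, if_neg h]; ring
  rw [Finset.sum_congr rfl h1, Finset.sum_add_distrib]
  congr 1
  rw [Finset.sum_ite_eq' (Finset.range n) 0 (fun s => X s - Y s),
    if_pos (Finset.mem_range.2 hn)]

lemma schI_CS_algebra (n : ℕ) (t a b : ℕ → ℝ) (lam : ℝ) :
    ∑ s ∈ Finset.range n, t s * (lam * a s + (1 - lam) * b s)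
      = lam * ∑ s ∈ Finset.range n, t s * a s
        + (1 - lam) * ∑ s ∈ Finset.range n, t s * b s := by
  rw [Finset.mul_sum, Finset.mul_sum, ← Finset.sum_add_distrib]
  exact Finset.sum_congr rfl fun s _ => by ring

lemma csf_le_welf_sub_rev (v : Fin K → ℝ) (hv0 : ∀ k, 0 < v k) {y : Fin K → ℝ}
    (hy : ∀ j, 0 ≤ y j) (k : Fin K) :
    csf v y k ≤ welf v y - rev v y k := by
  unfold csf welf rev
  rw [Finset.mul_sum]
  have h1 : ∑ j ∈ Finset.Ici k, (v j - v k) * y j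
      = ∑ j ∈ Finset.Ici k, v j * y j - ∑ j ∈ Finset.Ici k, v k * y j := by
    rw [← Finset.sum_sub_distrib]
    exact Finset.sum_congr rfl fun j _ => by ring
  rw [h1]
  have h2 : ∑ j ∈ Finset.Ici k, v j * y j ≤ ∑ j, v j * y j := by
    apply Finset.sum_le_sum_of_subset_of_nonneg (Finset.subset_univ _)
    intro j _ _
    exact mul_nonneg (le_of_lt (hv0 j)) (hy j)
  linarith

lemma pmin_eq_bot (hK : 0 < K) (S : ℕ → Finset (Fin K)) (istar : Fin K) {s : ℕ}
    (hne : (S s).Nonempty) (hb : (⟨0, hK⟩ : Fin K) ∈ S s) :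
    pmin S istar s = ⟨0, hK⟩ := by
  rw [pmin, dif_pos hne]
  apply le_antisymm
  · exact Finset.min'_le _ _ hb
  · rw [Fin.le_def]; exact Nat.zero_le _

lemma pmax_eq_top (hK : 0 < K) (S : ℕ → Finset (Fin K)) (istar : Fin K) {s : ℕ}
    (hne : (S s).Nonempty) (hb : (⟨K-1, by omega⟩ : Fin K) ∈ S s) :
    pmax S istar s = ⟨K-1, by omega⟩ := by
  rw [pmax, dif_pos hne]
  apply le_antisymm
  · rw [Fin.le_def]
    show _ ≤ K - 1
    have := ((S s).max' hne).isLt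
    omega
  · exact Finset.le_max' _ _ hb

end Assembly

section Backward
variable {K : ℕ}

lemma backward (hK2 : 2 ≤ K) (v : Fin K → ℝ) (hv0 : ∀ k, 0 < v k) (hv : StrictMono v)
    (xstar : Fin K → ℝ) (hxstar : IsMarket K xstar) (hxpos : ∀ k, 0 < xstar k)
    (πstar : ℝ) (hπ : IsGreatest (Set.range (rev v xstar)) πstar)
    (hneq : xstar ≠ xSeg v Finset.univ)
    (u : ℝ) (h0u : 0 ≤ u) (huM : u ≤ (∑ j, v j * xstar j) - πstar) :
    ∃ (A : Finset (Fin K)) (xs : Fin K → Fin K → ℝ) (w : Fin K → ℝ),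
      IsDirectSeg v xstar A xs w ∧ directCS v A xs w = u ∧ directPS v A xs w = πstar := by
  classical
  have hK : 0 < K := by omega
  obtain ⟨⟨istar, hist⟩, hub⟩ := hπ
  have hOPT : ∀ i, rev v xstar i ≤ rev v xstar istar := by
    intro i
    rw [hist]
    exact hub (Set.mem_range_self i)
  have hsupp : fsupp xstar = Finset.univ := by
    ext j
    simp only [mem_fsupp, Finset.mem_univ, iff_true]
    exact ne_of_gt (hxpos j)
  obtain ⟨n, S, t, hSne, htpos, hmem, hdec, hS0, htsum, hpt⟩ :=
    chain_exists v hv0 hv istar (fsupp xstar).card xstar le_rfl hxstar.1 hOPT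
  have hn0 : 0 < n := by
    by_contra h
    have hn : n = 0 := by omega
    have := hpt ⟨0, hK⟩
    rw [hn, Finset.sum_range_zero] at this
    exact absurd this.symm (ne_of_gt (hxpos ⟨0, hK⟩))
  have h5 : S 0 = Finset.univ := by rw [hS0 hn0, hsupp]
  have htsum1 : ∑ s ∈ Finset.range n, t s = 1 := by rw [htsum, hxstar.2]
  have hn2 : 2 ≤ n := by
    by_contra h
    have hn : n = 1 := by omega
    apply hneq
    funext j
    have := hpt j
    rw [hn, Finset.sum_range_one] at this
    have ht01 : t 0 = 1 := by
      rw [hn, Finset.sum_range_one] at htsum1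
      exact htsum1
    rw [ht01, one_mul, h5] at this
    exact this.symm
  have hch : ChainHyp v istar xstar n S t :=
    ⟨hSne, htpos, hmem, hdec, h5, htsum1, hpt, hn2⟩
  -- abbreviations
  set z : ℕ → Fin K → ℝ := fun s => xSeg v (S s) with hz
  have hxse : xstar = fun j => ∑ s ∈ Finset.range n, t s * z s j :=
    funext fun j => (hpt j).symm
  set D0 : ℝ := csf v xstar istar with hD0def
  set M : ℝ := (∑ j, v j * xstar j) - πstar with hMdef
  have hCI : ∑ s ∈ Finset.range n, t s * csf v (z s) istar = D0 := by
    rw [hD0def, hxse, csf_linear]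
  have hCM : ∑ s ∈ Finset.range n, t s * csf v (z s) (pmin S istar s) = M := by
    have hterm : ∀ s ∈ Finset.range n, t s * csf v (z s) (pmin S istar s)
        = t s * (welf v (z s) - rev v (z s) istar) := by
      intro s hs
      have hsn := Finset.mem_range.1 hs
      have hpmem : pmin S istar s ∈ S s := by
        rw [pmin, dif_pos (hSne s hsn)]; exact (S s).min'_mem _
      congr 1
      rw [csf_eq_welf_sub_rev, rev_z_eq v istar xstar n S t hv0 hv hch hsn hpmem]
      intro j hj
      apply xSeg_eq_zero
      intro hjS
      apply hj
      rw [pmin, dif_pos (hSne s hsn)]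
      exact Finset.min'_le _ _ hjS
    rw [Finset.sum_congr rfl hterm]
    have h1 : ∑ s ∈ Finset.range n, t s * (welf v (z s) - rev v (z s) istar)
        = ∑ s ∈ Finset.range n, t s * welf v (z s)
          - ∑ s ∈ Finset.range n, t s * rev v (z s) istar := by
      rw [← Finset.sum_sub_distrib]
      exact Finset.sum_congr rfl fun s _ => by ring
    rw [h1, hMdef]
    congr 1
    · rw [show ∑ j, v j * xstar j = welf v xstar from rfl, hxse, welf_linear]
    · rw [← hist, hxse, rev_linear]
  have hxnn : ∀ j, 0 ≤ xstar j := hxstar.1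
  have hD0nn : 0 ≤ D0 := csf_nonneg v hv hxnn istar
  have hD0M : D0 ≤ M := by
    have := csf_le_welf_sub_rev v hv0 hxnn istar
    rw [hD0def, hMdef, ← hist]
    exact this
  -- the three main cases
  by_cases huMeq : u = M
  · -- u = M : scheme I with lam = 1
    obtain ⟨A, xs, w, hseg, hcs, hps⟩ :=
      schemeI v istar xstar n S t hv0 hv hch 1 zero_le_one le_rfl hK (Or.inl rfl)
    refine ⟨A, xs, w, hseg, ?_, by rw [hps, hist]⟩
    rw [hcs, schI_CS_algebra n t (fun s => csf v (z s) (pmin S istar s))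
      (fun s => csf v (z s) istar) 1]
    rw [hCM, hCI]
    rw [huMeq]; ring
  · by_cases huD : D0 ≤ u
    · -- phase I : D0 ≤ u < M
      have huMlt : u < M := lt_of_le_of_ne huM huMeq
      by_cases hdeg : ∀ s, s < n → (⟨0, hK⟩ : Fin K) ∈ S s
      · -- degenerate top
        have hpm : ∀ s, s < n → pmin S istar s = (⟨0, hK⟩ : Fin K) :=
          fun s hs => pmin_eq_bot hK S istar (hSne s hs) (hdeg s hs)
        set a : ℕ → ℝ := fun s => csf v (z s) (⟨0, hK⟩ : Fin K) with ha
        set b : ℕ → ℝ := fun s => csf v (z s) istar with hb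
        have hCA : ∑ s ∈ Finset.range n, t s * a s = M := by
          rw [← hCM]
          apply Finset.sum_congr rfl
          intro s hs
          rw [hpm s (Finset.mem_range.1 hs)]
        set T1 : ℝ := t 0 * (a 0 - b 0) with hT1
        have hT1nn : 0 ≤ T1 := by
          have hmono : csf v (z 0) istar ≤ csf v (z 0) (⟨0, hK⟩ : Fin K) :=
            csf_antitone v hv (y := z 0) (fun j => xSeg_nonneg v hv0 hv j)
              (show (⟨0, hK⟩ : Fin K) ≤ istar by rw [Fin.le_def]; exact Nat.zero_le _)
          have ht0 : 0 < t 0 := htpos 0 (by omega)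
          rw [hT1]
          nlinarith
        by_cases huT : u ≤ D0 + T1
        · -- scheme DegB with p0 = bot
          set mu : ℝ := if T1 = 0 then 0 else (u - D0) / T1 with hmu
          have hT1pos : T1 ≠ 0 → 0 < T1 := fun h => lt_of_le_of_ne hT1nn (Ne.symm h)
          have hmu0 : 0 ≤ mu := by
            rw [hmu]
            split_ifs with h
            · exact le_refl 0
            · exact div_nonneg (by linarith) (le_of_lt (hT1pos h))
          have hmu1 : mu ≤ 1 := by
            rw [hmu]
            split_ifs with h
            · linarith
            · rw [div_le_one (hT1pos h)]; linarith
          obtain ⟨A, xs, w, hseg, hcs, hps⟩ :=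
            schemeDegB v istar xstar n S t hv0 hv hch hneq (⟨0, hK⟩ : Fin K) mu hmu0 hmu1
          refine ⟨A, xs, w, hseg, ?_, by rw [hps, hist]⟩
          rw [hcs]
          have halg : ∑ s ∈ Finset.range n,
              t s * ((if s = 0 then mu else 0) * a s + (1 - (if s = 0 then mu else 0)) * b s)
              = ∑ s ∈ Finset.range n, t s * b s + mu * T1 := by
            have h1 : ∀ s ∈ Finset.range n,
                t s * ((if s = 0 then mu else 0) * a s + (1 - (if s = 0 then mu else 0)) * b s)
                = (if s = 0 then t s * (mu * a s + (1 - mu) * b s) else t s * b s) := by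
              intro s _
              by_cases h : s = 0 <;> simp [h]
            rw [Finset.sum_congr rfl h1,
              sum_ite_zero_split (by omega : 0 < n)
                (fun s => t s * (mu * a s + (1 - mu) * b s)) (fun s => t s * b s), hT1]
            ring
          rw [halg, hCI]
          rcases eq_or_ne T1 0 with h | h
          · have : u = D0 := by rw [h, add_zero] at huT; linarith
            rw [this, hmu, if_pos h]; ring
          · rw [hmu, if_neg h, div_mul_cancel₀ _ h]; ring
        · -- scheme DegA with p0 = bot
          push_neg at huT
          have hgm : D0 + T1 < M := lt_of_lt_of_le huT huM
          set sig : ℝ := (u - (D0 + T1)) / (M - (D0 + T1)) with hsig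
          have hden : 0 < M - (D0 + T1) := by linarith
          have hsig0 : 0 ≤ sig := div_nonneg (by linarith) (le_of_lt hden)
          have hsig1 : sig ≤ 1 := by rw [div_le_one hden]; linarith
          obtain ⟨A, xs, w, hseg, hcs, hps⟩ :=
            schemeDegA v istar xstar n S t hv0 hv hch (⟨0, hK⟩ : Fin K) sig hsig0 hsig1 hdeg
          refine ⟨A, xs, w, hseg, ?_, by rw [hps, hist]⟩
          rw [hcs]
          have halg : ∑ s ∈ Finset.range n,
              t s * ((if s = 0 then 1 else sig) * a s + (1 - (if s = 0 then 1 else sig)) * b s)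
              = (∑ s ∈ Finset.range n, t s * (sig * a s + (1 - sig) * b s)) + (1 - sig) * T1 := by
            have h1 : ∀ s ∈ Finset.range n,
                t s * ((if s = 0 then 1 else sig) * a s + (1 - (if s = 0 then 1 else sig)) * b s)
                = (if s = 0 then t s * a s else t s * (sig * a s + (1 - sig) * b s)) := by
              intro s _
              by_cases h : s = 0
              · simp only [if_pos h]; ring
              · simp only [if_neg h]
            rw [Finset.sum_congr rfl h1,
              sum_ite_zero_split (by omega : 0 < n)
                (fun s => t s * a s) (fun s => t s * (sig * a s + (1 - sig) * b s)), hT1]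
            ring
          rw [halg, schI_CS_algebra n t a b sig, hCA, hCI]
          rw [hsig]
          field_simp
          ring
      · -- non-degenerate top : scheme I
        push_neg at hdeg
        obtain ⟨s₃, hs₃, hb₃⟩ := hdeg
        have hMD : 0 < M - D0 := by linarith
        set lam : ℝ := (u - D0) / (M - D0) with hlam
        have hlam0 : 0 ≤ lam := div_nonneg (by linarith) (le_of_lt hMD)
        have hlam1 : lam ≤ 1 := by rw [div_le_one hMD]; linarith
        obtain ⟨A, xs, w, hseg, hcs, hps⟩ :=
          schemeI v istar xstar n S t hv0 hv hch lam hlam0 hlam1 hK (Or.inr ⟨s₃, hs₃, hb₃⟩)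
        refine ⟨A, xs, w, hseg, ?_, by rw [hps, hist]⟩
        rw [hcs, schI_CS_algebra n t (fun s => csf v (z s) (pmin S istar s))
          (fun s => csf v (z s) istar) lam, hCM, hCI, hlam]
        field_simp
        ring
    · -- phase II : 0 ≤ u < D0
      push_neg at huD
      have hD0pos : 0 < D0 := lt_of_le_of_lt h0u huD
      by_cases hdegb : ∀ s, s < n → (⟨K-1, by omega⟩ : Fin K) ∈ S s
      · -- degenerate bottom
        set a : ℕ → ℝ := fun s => csf v (z s) (⟨K-1, by omega⟩ : Fin K) with ha
        set b : ℕ → ℝ := fun s => csf v (z s) istar with hb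
        have hazero : ∀ s, a s = 0 := fun s => csf_top v (z s) hK
        set T1 : ℝ := t 0 * (a 0 - b 0) with hT1
        have hT1np : T1 ≤ 0 := by
          rw [hT1, hazero 0]
          have hb0 : 0 ≤ b 0 := csf_nonneg v hv (fun j => xSeg_nonneg v hv0 hv j) istar
          have ht0 : 0 < t 0 := htpos 0 (by omega)
          nlinarith
        by_cases huT : D0 + T1 ≤ u
        · -- scheme DegB with p0 = top
          have hT1ne : T1 ≠ 0 := by
            intro h
            rw [h, add_zero] at huT
            linarith
          have hT1neg : T1 < 0 := lt_of_le_of_ne hT1np hT1ne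
          set mu : ℝ := (u - D0) / T1 with hmu
          have hmu0 : 0 ≤ mu := by
            rw [hmu, div_nonneg_iff]
            right
            constructor <;> linarith
          have hmu1 : mu ≤ 1 := by
            rw [hmu, div_le_iff_of_neg hT1neg]
            linarith
          obtain ⟨A, xs, w, hseg, hcs, hps⟩ :=
            schemeDegB v istar xstar n S t hv0 hv hch hneq (⟨K-1, by omega⟩ : Fin K) mu hmu0 hmu1
          refine ⟨A, xs, w, hseg, ?_, by rw [hps, hist]⟩
          rw [hcs]
          have halg : ∑ s ∈ Finset.range n,
              t s * ((if s = 0 then mu else 0) * a s + (1 - (if s = 0 then mu else 0)) * b s)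
              = ∑ s ∈ Finset.range n, t s * b s + mu * T1 := by
            have h1 : ∀ s ∈ Finset.range n,
                t s * ((if s = 0 then mu else 0) * a s + (1 - (if s = 0 then mu else 0)) * b s)
                = (if s = 0 then t s * (mu * a s + (1 - mu) * b s) else t s * b s) := by
              intro s _
              by_cases h : s = 0 <;> simp [h]
            rw [Finset.sum_congr rfl h1,
              sum_ite_zero_split (by omega : 0 < n)
                (fun s => t s * (mu * a s + (1 - mu) * b s)) (fun s => t s * b s), hT1]
            ring
          rw [halg, hCI, hmu, div_mul_cancel₀ _ hT1ne]
          ring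
        · -- scheme DegA with p0 = top
          push_neg at huT
          have hpos : 0 < D0 + T1 := lt_of_le_of_lt h0u huT
          set sig : ℝ := 1 - u / (D0 + T1) with hsig
          have hsig0 : 0 ≤ sig := by
            rw [hsig, sub_nonneg, div_le_one hpos]
            linarith
          have hsig1 : sig ≤ 1 := by
            rw [hsig]
            have : 0 ≤ u / (D0 + T1) := div_nonneg h0u (le_of_lt hpos)
            linarith
          obtain ⟨A, xs, w, hseg, hcs, hps⟩ :=
            schemeDegA v istar xstar n S t hv0 hv hch (⟨K-1, by omega⟩ : Fin K) sig hsig0 hsig1 hdegb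
          refine ⟨A, xs, w, hseg, ?_, by rw [hps, hist]⟩
          rw [hcs]
          have halg : ∑ s ∈ Finset.range n,
              t s * ((if s = 0 then 1 else sig) * a s + (1 - (if s = 0 then 1 else sig)) * b s)
              = (∑ s ∈ Finset.range n, t s * (sig * a s + (1 - sig) * b s)) + (1 - sig) * T1 := by
            have h1 : ∀ s ∈ Finset.range n,
                t s * ((if s = 0 then 1 else sig) * a s + (1 - (if s = 0 then 1 else sig)) * b s)
                = (if s = 0 then t s * a s else t s * (sig * a s + (1 - sig) * b s)) := by
              intro s _
              by_cases h : s = 0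
              · simp only [if_pos h]; ring
              · simp only [if_neg h]
            rw [Finset.sum_congr rfl h1,
              sum_ite_zero_split (by omega : 0 < n)
                (fun s => t s * a s) (fun s => t s * (sig * a s + (1 - sig) * b s)), hT1]
            ring
          have hCA0 : ∑ s ∈ Finset.range n, t s * a s = 0 := by
            apply Finset.sum_eq_zero
            intro s _
            rw [hazero s, mul_zero]
          rw [halg, schI_CS_algebra n t a b sig, hCA0, hCI, hsig]
          field_simp
          ring
      · -- non-degenerate bottom : scheme II
        push_neg at hdegb
        obtain ⟨s₃, hs₃, hb₃⟩ := hdegb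
        set lam : ℝ := 1 - u / D0 with hlam
        have hlam0 : 0 ≤ lam := by
          rw [hlam, sub_nonneg, div_le_one hD0pos]
          linarith
        have hlam1 : lam ≤ 1 := by
          rw [hlam]
          have : 0 ≤ u / D0 := div_nonneg h0u (le_of_lt hD0pos)
          linarith
        obtain ⟨A, xs, w, hseg, hcs, hps⟩ :=
          schemeII v istar xstar n S t hv0 hv hch lam hlam0 hlam1 hK (Or.inr ⟨s₃, hs₃, hb₃⟩)
        refine ⟨A, xs, w, hseg, ?_, by rw [hps, hist]⟩
        rw [hcs, schI_CS_algebra n t (fun s => csf v (z s) (pmax S istar s))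
          (fun s => csf v (z s) istar) lam, hCI]
        have hCMx : ∑ s ∈ Finset.range n, t s * csf v (z s) (pmax S istar s) = 0 := by
          apply Finset.sum_eq_zero
          intro s hs
          have hsn := Finset.mem_range.1 hs
          rw [show pmax S istar s = (S s).max' (hSne s hsn) by
            rw [pmax, dif_pos (hSne s hsn)]]
          rw [csf_xSeg_max v (hSne s hsn), mul_zero]
        rw [hCMx, hlam]
        field_simp
        ring

end Backward

section Fwd
variable {K : ℕ}

lemma forward (v : Fin K → ℝ) (hv0 : ∀ k, 0 < v k) (hv : StrictMono v)
    (xstar : Fin K → ℝ) (A : Finset (Fin K)) (xs : Fin K → Fin K → ℝ) (w : Fin K → ℝ)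
    (hseg : IsDirectSeg v xstar A xs w) :
    0 ≤ directCS v A xs w ∧
    directCS v A xs w + directPS v A xs w ≤ ∑ j, v j * xstar j := by
  obtain ⟨hinj, hmkt, hopt, hwpos, hwsum, hcomb⟩ := hseg
  constructor
  · apply Finset.sum_nonneg
    intro k hk
    apply mul_nonneg (le_of_lt (hwpos k hk))
    apply Finset.sum_nonneg
    intro j hj
    exact mul_nonneg (sub_nonneg.2 (hv.monotone (Finset.mem_Ici.1 hj))) ((hmkt k hk).1 j)
  · unfold directCS directPS
    rw [← Finset.sum_add_distrib]
    have hk1 : ∀ k ∈ A, w k * ∑ j ∈ Finset.Ici k, (v j - v k) * xs k j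
        + w k * (v k * ∑ j ∈ Finset.Ici k, xs k j)
        ≤ w k * ∑ j, v j * xs k j := by
      intro k hk
      have h1 : ∑ j ∈ Finset.Ici k, (v j - v k) * xs k j
          + v k * ∑ j ∈ Finset.Ici k, xs k j
          = ∑ j ∈ Finset.Ici k, v j * xs k j := by
        rw [Finset.mul_sum, ← Finset.sum_add_distrib]
        exact Finset.sum_congr rfl fun j _ => by ring
      have h2 : ∑ j ∈ Finset.Ici k, v j * xs k j ≤ ∑ j, v j * xs k j := by
        apply Finset.sum_le_sum_of_subset_of_nonneg (Finset.subset_univ _)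
        intro j _ _
        exact mul_nonneg (le_of_lt (hv0 j)) ((hmkt k hk).1 j)
      calc w k * ∑ j ∈ Finset.Ici k, (v j - v k) * xs k j
          + w k * (v k * ∑ j ∈ Finset.Ici k, xs k j)
          = w k * (∑ j ∈ Finset.Ici k, (v j - v k) * xs k j
            + v k * ∑ j ∈ Finset.Ici k, xs k j) := by ring
        _ = w k * ∑ j ∈ Finset.Ici k, v j * xs k j := by rw [h1]
        _ ≤ w k * ∑ j, v j * xs k j :=
            mul_le_mul_of_nonneg_left h2 (le_of_lt (hwpos k hk))
    calc ∑ k ∈ A, (w k * ∑ j ∈ Finset.Ici k, (v j - v k) * xs k j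
          + w k * (v k * ∑ j ∈ Finset.Ici k, xs k j))
        ≤ ∑ k ∈ A, w k * ∑ j, v j * xs k j := Finset.sum_le_sum hk1
      _ = ∑ j, v j * xstar j := by
          have hx : ∀ j, xstar j = ∑ k ∈ A, w k * xs k j := by
            intro j
            rw [← hcomb, Finset.sum_apply]
            exact Finset.sum_congr rfl fun k _ => rfl
          calc ∑ k ∈ A, w k * ∑ j, v j * xs k j
              = ∑ k ∈ A, ∑ j, w k * (v j * xs k j) :=
                Finset.sum_congr rfl fun k _ => by rw [Finset.mul_sum]
            _ = ∑ j, ∑ k ∈ A, w k * (v j * xs k j) := Finset.sum_comm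
            _ = ∑ j, v j * xstar j := by
                apply Finset.sum_congr rfl
                intro j _
                rw [hx j, Finset.mul_sum]
                exact Finset.sum_congr rfl fun k _ => by ring


end Fwd

theorem stmt10 {K : ℕ} (hK : 2 ≤ K) (v : Fin K → ℝ)
    (hv0 : ∀ k, 0 < v k) (hv : StrictMono v)
    (xstar : Fin K → ℝ) (hxstar : IsMarket K xstar) (hxpos : ∀ k, 0 < xstar k)
    (wstar πstar : ℝ) (hw : wstar = ∑ j, v j * xstar j)
    (hπ : IsGreatest (Set.range (rev v xstar)) πstar)
    (xV : Fin K → ℝ) (hxV : IsCharMarket v Finset.univ xV) (hne : xstar ≠ xV)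
    (u : ℝ) :
    (∃ (A : Finset (Fin K)) (xs : Fin K → Fin K → ℝ) (w : Fin K → ℝ),
        IsDirectSeg v xstar A xs w ∧ directCS v A xs w = u ∧ directPS v A xs w = πstar) ↔
      (0 ≤ u ∧ u ≤ wstar - πstar) := by
  constructor
  · rintro ⟨A, xs, w, hseg, hCS, hPS⟩
    have hf := forward v hv0 hv xstar A xs w hseg
    constructor
    · rw [← hCS]; exact hf.1
    · rw [hw]
      have h2 := hf.2
      rw [hCS, hPS] at h2
      linarith
  · rintro ⟨h0u, huM⟩
    have hxVeq : xV = xSeg v Finset.univ := by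
      apply charMarket_unique v (by omega) hv0 hxV.1.2
      intro i i'
      exact hxV.2.2 i (Finset.mem_univ i) i' (Finset.mem_univ i')
    have hneq : xstar ≠ xSeg v Finset.univ := by rw [← hxVeq]; exact hne
    rw [hw] at huM
    exact backward hK v hv0 hv xstar hxstar hxpos πstar hπ hneq u h0u huM
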